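/- arXiv:2103.01194 — 6 statements merged into one kernel-verified Lean document; each statement's English description precedes it below -/
import Mathlib

section
/- For every real t ≥ 0 and every Hermitian d×d complex matrix F, one has ‖exp(tJ) · F · (exp(tJ))ᴴ‖₁ ≤ ‖F‖₁; in particular the superoperator exp(t·𝓛_J) is a contraction in trace norm on Hermitian matrices. -/
open MeasureTheory Filter
open scoped InnerProductSpace
open scoped Matrix ComplexOrder

attribute [local instance] Matrix.normedAddCommGroup Matrix.normedSpace

/-- Trace norm (Schatten-1 norm) of a complex matrix: `‖A‖₁ = Tr √(Aᴴ A)`. -/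
noncomputable def traceNorm {d : ℕ} (A : Matrix (Fin d) (Fin d) ℂ) : ℝ :=
  ((Matrix.posSemidef_conjTranspose_mul_self A).1.eigenvectorUnitary.1
    * Matrix.diagonal (fun i => ((Real.sqrt ((Matrix.posSemidef_conjTranspose_mul_self A).1.eigenvalues i) : ℝ) : ℂ))
    * (star (Matrix.posSemidef_conjTranspose_mul_self A).1.eigenvectorUnitary : Matrix (Fin d) (Fin d) ℂ)).trace.re

/-- The superoperator `ρ ↦ A * ρ * B`. -/
noncomputable def sandwich {d : ℕ} (A B : Matrix (Fin d) (Fin d) ℂ) :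
    Matrix (Fin d) (Fin d) ℂ →ₗ[ℂ] Matrix (Fin d) (Fin d) ℂ :=
  (LinearMap.mulLeft ℂ A).comp (LinearMap.mulRight ℂ B)

/-- The completely positive part `𝓛_L(ρ) = ∑ k, L_k ρ L_kᴴ`. -/
noncomputable def LLop {d κ : ℕ} (L : Fin κ → Matrix (Fin d) (Fin d) ℂ) :
    Matrix (Fin d) (Fin d) ℂ →ₗ[ℂ] Matrix (Fin d) (Fin d) ℂ :=
  ∑ k, sandwich (L k) ((L k)ᴴ)

/-- The superoperator `𝓛_J(ρ) = J ρ + ρ Jᴴ`, as a continuous linear endomorphism. -/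
noncomputable def LJop {d : ℕ} (J : Matrix (Fin d) (Fin d) ℂ) :
    Matrix (Fin d) (Fin d) ℂ →L[ℂ] Matrix (Fin d) (Fin d) ℂ :=
  LinearMap.toContinuousLinearMap (LinearMap.mulLeft ℂ J + LinearMap.mulRight ℂ Jᴴ)

/-- The Lindblad generator
`𝓛(ρ) = -i(Hρ - ρH) + ∑ k (L_k ρ L_kᴴ - ½(L_kᴴ L_k ρ + ρ L_kᴴ L_k))`. -/
noncomputable def lindbladOp {d κ : ℕ} (H : Matrix (Fin d) (Fin d) ℂ)
    (L : Fin κ → Matrix (Fin d) (Fin d) ℂ) :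
    Matrix (Fin d) (Fin d) ℂ →L[ℂ] Matrix (Fin d) (Fin d) ℂ :=
  LinearMap.toContinuousLinearMap
    ((-Complex.I) • (LinearMap.mulLeft ℂ H - LinearMap.mulRight ℂ H)
      + ∑ k, (sandwich (L k) ((L k)ᴴ)
          - (1 / 2 : ℂ) • (LinearMap.mulLeft ℂ ((L k)ᴴ * L k)
              + LinearMap.mulRight ℂ ((L k)ᴴ * L k))))




lemma HasDerivAt.comp_ofReal' {E : Type*} [NormedAddCommGroup E] [NormedSpace ℂ E]
    {f : ℂ → E} {f' : E} {x : ℝ} (hf : HasDerivAt f f' (x : ℂ)) :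
    HasDerivAt (fun t : ℝ => f t) f' x := by
  simpa [Function.comp_def] using (hf.hasFDerivAt.restrictScalars ℝ).comp_hasDerivAt x Complex.ofRealCLM.hasDerivAt

lemma exp_dissipative_contraction {E : Type*} [NormedAddCommGroup E] [InnerProductSpace ℂ E]
    [CompleteSpace E] (T : E →L[ℂ] E) (hT : ∀ y : E, (⟪y, T y⟫_ℂ).re ≤ 0)
    {t : ℝ} (ht : 0 ≤ t) (y : E) :
    ‖NormedSpace.exp ((t : ℂ) • T) y‖ ≤ ‖y‖ := by
  set g : ℝ → E := fun s => NormedSpace.exp ((s : ℂ) • T) y with hg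
  have hder : ∀ s : ℝ, HasDerivAt g (T (g s)) s := by
    intro s
    have h1 := hasDerivAt_exp_smul_const' (𝕂 := ℂ) T (s : ℂ)
    have h2 : HasDerivAt (fun z : ℂ => NormedSpace.exp (z • T) y)
        ((T * NormedSpace.exp ((s : ℂ) • T)) y) (s : ℂ) := by
      simpa using h1.clm_apply (hasDerivAt_const _ y)
    have h3 := h2.comp_ofReal'
    simpa [g, ContinuousLinearMap.mul_apply] using h3
  set f : ℝ → ℝ := fun s => (⟪g s, g s⟫_ℂ).re with hf
  have hfder : ∀ s, HasDerivAt f ((⟪g s, T (g s)⟫_ℂ + ⟪T (g s), g s⟫_ℂ).re) s := by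
    intro s
    have h5 := HasDerivAt.inner (𝕜 := ℂ) (hder s) (hder s)
    exact Complex.reCLM.hasFDerivAt.comp_hasDerivAt s h5
  have hderiv_nonpos : ∀ s, deriv f s ≤ 0 := by
    intro s
    rw [(hfder s).deriv]
    have h4 : ⟪T (g s), g s⟫_ℂ = starRingEnd ℂ ⟪g s, T (g s)⟫_ℂ := (inner_conj_symm _ _).symm
    rw [h4, Complex.add_re, Complex.conj_re]
    linarith [hT (g s)]
  have hanti : Antitone f :=
    antitone_of_deriv_nonpos (fun s => (hfder s).differentiableAt) hderiv_nonpos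
  have h0 : f t ≤ f 0 := hanti ht
  have hfs : ∀ s, f s = ‖g s‖ ^ 2 := fun s => by
    rw [hf]; exact_mod_cast inner_self_eq_norm_sq (𝕜 := ℂ) (g s)
  have hg0 : g 0 = y := by simp [hg]
  have hle : ‖g t‖ ^ 2 ≤ ‖y‖ ^ 2 := by rw [← hfs t, ← hg0]; simpa [hfs] using h0
  nlinarith [norm_nonneg (g t), norm_nonneg y, hle]

lemma traceNorm_of_isHermitian {d : ℕ} {X : Matrix (Fin d) (Fin d) ℂ} (hX : X.IsHermitian) :
    traceNorm X = ∑ i, |hX.eigenvalues i| := by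
  classical
  set U : Matrix (Fin d) (Fin d) ℂ := (hX.eigenvectorUnitary : Matrix (Fin d) (Fin d) ℂ) with hU
  have hU1 : U * star U = 1 := (Matrix.mem_unitaryGroup_iff).mp (hX.eigenvectorUnitary).2
  have hU2 : star U * U = 1 := (Matrix.mem_unitaryGroup_iff').mp (hX.eigenvectorUnitary).2
  set D : Matrix (Fin d) (Fin d) ℂ :=
    Matrix.diagonal (fun i => ((|hX.eigenvalues i| : ℝ) : ℂ)) with hD
  set P : Matrix (Fin d) (Fin d) ℂ := U * D * star U with hP
  have hDpsd : D.PosSemidef := by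
    rw [hD]
    refine Matrix.posSemidef_diagonal_iff.mpr fun i => ?_
    exact_mod_cast abs_nonneg (hX.eigenvalues i)
  have hPpsd : P.PosSemidef := by
    rw [hP, Matrix.star_eq_conjTranspose]
    exact hDpsd.mul_mul_conjTranspose_same U
  have key : ∀ v : Fin d → ℂ, (U * Matrix.diagonal v * star U) * (U * Matrix.diagonal v * star U)
      = U * Matrix.diagonal (fun i => v i * v i) * star U := by
    intro v
    simp only [Matrix.mul_assoc]
    rw [← Matrix.mul_assoc (star U) U, hU2, Matrix.one_mul,
        ← Matrix.mul_assoc (Matrix.diagonal v) (Matrix.diagonal v),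
        Matrix.diagonal_mul_diagonal]
  have hsq : P ^ 2 = Xᴴ * X := by
    have hXX : Xᴴ * X = X * X := by rw [hX.eq]
    rw [pow_two, hXX]
    conv_rhs => rw [hX.spectral_theorem, Unitary.conjStarAlgAut_apply]
    have habs : (fun i => ((|hX.eigenvalues i| : ℝ) : ℂ) * ((|hX.eigenvalues i| : ℝ) : ℂ))
        = fun i => (RCLike.ofReal ∘ hX.eigenvalues) i * (RCLike.ofReal ∘ hX.eigenvalues) i := by
      funext i
      rw [← Complex.ofReal_mul, abs_mul_abs_self, Function.comp_apply, Complex.ofReal_mul]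
      rfl
    rw [hP, hD, key, key, habs]
  have heq : P = (Matrix.posSemidef_conjTranspose_mul_self X).1.cfc Real.sqrt := by
    have hsa : IsSelfAdjoint X := hX
    have hXX : Xᴴ * X = X * X := by rw [hX.eq]
    have h1 : X * X = cfc (fun x : ℝ => x * x) X := by
      rw [cfc_mul (fun x : ℝ => x) (fun x : ℝ => x) X, cfc_id' ℝ X]
    have h2 : cfc (Real.sqrt ∘ fun x : ℝ => x * x) X = cfc (fun x : ℝ => |x|) X := by
      congr 1; funext x; exact Real.sqrt_mul_self_eq_abs x
    rw [← Matrix.IsHermitian.cfc_eq, hXX, h1, ← cfc_comp Real.sqrt (fun x : ℝ => x * x) X, h2,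
      hX.cfc_eq]
    rfl
  show ((Matrix.posSemidef_conjTranspose_mul_self X).1.cfc Real.sqrt).trace.re = _
  rw [← heq, hP, Matrix.trace_mul_cycle, hU2, Matrix.one_mul, hD,
      Matrix.trace_diagonal]
  rw [← Complex.ofReal_sum]
  exact Complex.ofReal_re _

lemma sum_normSq_mulVec_unitary {d : ℕ} {M : Matrix (Fin d) (Fin d) ℂ}
    (hM : Mᴴ * M = 1) (v : Fin d → ℂ) :
    ∑ j, Complex.normSq ((M *ᵥ v) j) = ∑ j, Complex.normSq (v j) := by
  have key : ∀ (u : Fin d → ℂ), (∑ j, (Complex.normSq (u j) : ℂ)) = star u ⬝ᵥ u := by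
    intro u
    simp [dotProduct, Complex.mul_conj, mul_comm]
  have h1 : star (M *ᵥ v) ⬝ᵥ (M *ᵥ v) = star v ⬝ᵥ v := by
    rw [Matrix.star_mulVec, Matrix.dotProduct_mulVec, Matrix.vecMul_vecMul, hM,
      Matrix.vecMul_one]
  have h2 : (∑ j, (Complex.normSq ((M *ᵥ v) j) : ℂ)) = ∑ j, (Complex.normSq (v j) : ℂ) := by
    rw [key, key, h1]
  exact_mod_cast h2

lemma conj_unitary_diag {d : ℕ} (V D X : Matrix (Fin d) (Fin d) ℂ)
    (hV : star V * V = 1) (h : X = V * D * star V) : D = star V * X * V := by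
  subst h
  have h1 : D = (star V * V) * D * (star V * V) := by rw [hV]; simp
  conv_lhs => rw [h1]
  simp only [Matrix.mul_assoc]

lemma traceNorm_conj_le {d : ℕ} (A : Matrix (Fin d) (Fin d) ℂ)
    (hA : ∀ v : Fin d → ℂ, ∑ i, Complex.normSq ((A *ᵥ v) i) ≤ ∑ i, Complex.normSq (v i))
    (F : Matrix (Fin d) (Fin d) ℂ) (hF : F.IsHermitian) :
    traceNorm (A * F * Aᴴ) ≤ traceNorm F := by
  classical
  have hX : (A * F * Aᴴ).IsHermitian := by
    show _ = _
    simp [Matrix.conjTranspose_mul, Matrix.mul_assoc, hF.eq]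
  rw [traceNorm_of_isHermitian hX, traceNorm_of_isHermitian hF]
  set μ := hF.eigenvalues with hμ
  set ν := hX.eigenvalues with hν
  set U : Matrix (Fin d) (Fin d) ℂ := (hF.eigenvectorUnitary : Matrix (Fin d) (Fin d) ℂ) with hU
  set W : Matrix (Fin d) (Fin d) ℂ := (hX.eigenvectorUnitary : Matrix (Fin d) (Fin d) ℂ) with hW
  have hU1 : U * star U = 1 := (Matrix.mem_unitaryGroup_iff).mp (hF.eigenvectorUnitary).2
  have hU2 : star U * U = 1 := (Matrix.mem_unitaryGroup_iff').mp (hF.eigenvectorUnitary).2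
  have hW1 : W * star W = 1 := (Matrix.mem_unitaryGroup_iff).mp (hX.eigenvectorUnitary).2
  have hW2 : star W * W = 1 := (Matrix.mem_unitaryGroup_iff').mp (hX.eigenvectorUnitary).2
  set B : Matrix (Fin d) (Fin d) ℂ := star W * A * U with hBdef
  have hDν : Matrix.diagonal (RCLike.ofReal ∘ ν) = star W * (A * F * Aᴴ) * W :=
    conj_unitary_diag W _ _ hW2 hX.spectral_theorem
  have hB : Matrix.diagonal (RCLike.ofReal ∘ ν)
      = B * Matrix.diagonal (RCLike.ofReal ∘ μ) * Bᴴ := by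
    rw [hDν]
    conv_lhs => rw [hF.spectral_theorem]
    rw [hBdef]
    simp [Matrix.conjTranspose_mul, Matrix.star_eq_conjTranspose, Matrix.mul_assoc]
    rfl
  have hentry : ∀ j, (ν j : ℝ) = ∑ i, μ i * Complex.normSq (B j i) := by
    intro j
    have h1 := congrArg (fun M : Matrix (Fin d) (Fin d) ℂ => (M j j).re) hB
    simp only [Matrix.diagonal_apply_eq, Function.comp_apply] at h1
    rw [Matrix.mul_apply] at h1
    have h2 : (∑ k, (B * Matrix.diagonal ((RCLike.ofReal ∘ μ) : Fin d → ℂ)) j k * Bᴴ k j)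
        = ((∑ i, μ i * Complex.normSq (B j i) : ℝ) : ℂ) := by
      push_cast
      refine Finset.sum_congr rfl fun i _ => ?_
      rw [Matrix.mul_diagonal, Matrix.conjTranspose_apply]
      have h5 : B j i * star (B j i) = (Complex.normSq (B j i) : ℂ) := Complex.mul_conj _
      calc B j i * ((RCLike.ofReal ∘ μ) i) * star (B j i)
          = ((μ i : ℝ) : ℂ) * (B j i * star (B j i)) := by
            simp only [Function.comp_apply]
            rw [mul_right_comm, mul_comm]
            exact rfl
        _ = ((μ i : ℝ) : ℂ) * (Complex.normSq (B j i) : ℂ) := by rw [h5]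
    rw [h2] at h1
    simpa using h1
  calc (∑ j, |ν j|) ≤ ∑ j, ∑ i, |μ i| * Complex.normSq (B j i) := by
        refine Finset.sum_le_sum fun j _ => ?_
        rw [hentry j]
        refine (Finset.abs_sum_le_sum_abs _ _).trans ?_
        refine le_of_eq (Finset.sum_congr rfl fun i _ => ?_)
        rw [abs_mul, abs_of_nonneg (Complex.normSq_nonneg _)]
    _ = ∑ i, |μ i| * ∑ j, Complex.normSq (B j i) := by
        rw [Finset.sum_comm]
        exact Finset.sum_congr rfl fun i _ => (Finset.mul_sum _ _ _).symm
    _ ≤ ∑ i, |μ i| := by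
        refine Finset.sum_le_sum fun i _ => ?_
        refine mul_le_of_le_one_right (abs_nonneg _) ?_
        have hcol : (fun j => B j i) = (star W) *ᵥ (A *ᵥ (fun l => U l i)) := by
          funext j
          rw [hBdef]
          simp [Matrix.mul_apply, Matrix.mulVec, dotProduct, Finset.sum_mul,
            Finset.mul_sum, mul_assoc]
          rw [Finset.sum_comm]
        have hsw : (star W)ᴴ * star W = 1 := by
          rw [Matrix.star_eq_conjTranspose, Matrix.conjTranspose_conjTranspose]
          rw [Matrix.star_eq_conjTranspose] at hW1
          exact hW1
        have hWpres := sum_normSq_mulVec_unitary hsw (A *ᵥ (fun l => U l i))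
        have hUcol : ∑ l, Complex.normSq (U l i) = 1 := by
          have h3 := congrArg (fun M : Matrix (Fin d) (Fin d) ℂ => (M i i).re) hU2
          simp only [Matrix.one_apply_eq] at h3
          rw [Matrix.mul_apply] at h3
          have h4 : (∑ l, (star U) i l * U l i) = ((∑ l, Complex.normSq (U l i) : ℝ) : ℂ) := by
            push_cast
            refine Finset.sum_congr rfl fun l _ => ?_
            rw [Matrix.star_apply, mul_comm]
            exact Complex.mul_conj _
          rw [h4] at h3
          simpa using h3
        calc ∑ j, Complex.normSq (B j i)
            = ∑ j, Complex.normSq (((star W) *ᵥ (A *ᵥ (fun l => U l i))) j) := by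
              refine Finset.sum_congr rfl fun j _ => ?_
              exact congrArg Complex.normSq (congrFun hcol j)
          _ = ∑ j, Complex.normSq ((A *ᵥ (fun l => U l i)) j) := hWpres
          _ ≤ ∑ l, Complex.normSq (U l i) := hA _
          _ = 1 := hUcol


section Transfer

attribute [local instance] Matrix.normedAddCommGroup Matrix.normedSpace

lemma toEuclideanCLM_exp {d : ℕ} (M : Matrix (Fin d) (Fin d) ℂ) :
    Matrix.toEuclideanCLM (𝕜 := ℂ) (NormedSpace.exp M)
      = NormedSpace.exp (Matrix.toEuclideanCLM (𝕜 := ℂ) M) := by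
  set e := Matrix.toEuclideanCLM (𝕜 := ℂ) (n := Fin d) with he
  let lE : Matrix (Fin d) (Fin d) ℂ
      ≃ₗ[ℂ] (EuclideanSpace ℂ (Fin d) →L[ℂ] EuclideanSpace ℂ (Fin d)) :=
    { toFun := fun x => e x
      invFun := fun x => e.symm x
      map_add' := fun a b => map_add e a b
      map_smul' := fun c x => map_smul e c x
      left_inv := fun x => e.symm_apply_apply x
      right_inv := fun x => e.apply_symm_apply x }
  haveI : FiniteDimensional ℂ (EuclideanSpace ℂ (Fin d) →L[ℂ] EuclideanSpace ℂ (Fin d)) :=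
    LinearEquiv.finiteDimensional lE
  have hcont : Continuous lE.symm.toLinearMap :=
    lE.symm.toLinearMap.continuous_of_finiteDimensional
  have hsum : Summable (fun n : ℕ => ((Nat.factorial n : ℂ))⁻¹ • (e M) ^ n) :=
    NormedSpace.expSeries_summable' (𝕂 := ℂ) (e M)
  have h3 : ∀ n : ℕ, lE.symm.toLinearMap (((Nat.factorial n : ℂ))⁻¹ • (e M) ^ n)
      = ((Nat.factorial n : ℂ))⁻¹ • M ^ n := by
    intro n
    rw [_root_.map_smul]
    congr 1
    show e.symm ((e M) ^ n) = M ^ n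
    rw [← map_pow e M n, e.symm_apply_apply]
  have h4 : NormedSpace.exp M = e.symm (NormedSpace.exp (e M)) := by
    have h5 := (hsum.hasSum.map lE.symm.toLinearMap hcont).tsum_eq
    have h6 : ∑' (n : ℕ), ((Nat.factorial n : ℂ))⁻¹ • M ^ n
        = lE.symm.toLinearMap (∑' (n : ℕ), ((Nat.factorial n : ℂ))⁻¹ • (e M) ^ n) := by
      rw [← h5]
      exact tsum_congr fun n => (h3 n).symm
    rw [NormedSpace.exp_eq_tsum (𝕂 := ℂ), NormedSpace.exp_eq_tsum (𝕂 := ℂ)]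
    exact h6
  rw [h4, e.apply_symm_apply]

lemma euclidean_sum_normSq {d : ℕ} (w : Fin d → ℂ) :
    ∑ i, Complex.normSq (w i) = ‖(WithLp.equiv 2 (Fin d → ℂ)).symm w‖ ^ 2 := by
  rw [EuclideanSpace.norm_eq, Real.sq_sqrt (by positivity)]
  refine Finset.sum_congr rfl fun i _ => ?_
  rw [WithLp.equiv_symm_apply, PiLp.toLp_apply, Complex.sq_norm]

lemma exp_matrix_contracts {d : ℕ} (J : Matrix (Fin d) (Fin d) ℂ)
    (hdiss : ∀ y : EuclideanSpace ℂ (Fin d),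
      (inner (𝕜 := ℂ) y ((Matrix.toEuclideanCLM (𝕜 := ℂ) J) y)).re ≤ 0)
    {t : ℝ} (ht : 0 ≤ t) (v : Fin d → ℂ) :
    ∑ i, Complex.normSq (((NormedSpace.exp ((t : ℂ) • J)) *ᵥ v) i)
      ≤ ∑ i, Complex.normSq (v i) := by
  set e := Matrix.toEuclideanCLM (𝕜 := ℂ) (n := Fin d) with he
  set T := e J with hT
  set y : EuclideanSpace ℂ (Fin d) := (WithLp.equiv 2 (Fin d → ℂ)).symm v with hy
  have hconr := exp_dissipative_contraction T hdiss ht y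
  have htrans : e (NormedSpace.exp ((t : ℂ) • J)) = NormedSpace.exp ((t : ℂ) • T) := by
    rw [toEuclideanCLM_exp, _root_.map_smul, hT, he]
  have happ : NormedSpace.exp ((t : ℂ) • T) y
      = (WithLp.equiv 2 (Fin d → ℂ)).symm ((NormedSpace.exp ((t : ℂ) • J)) *ᵥ v) := by
    rw [← htrans, hy, WithLp.equiv_symm_apply, Matrix.toEuclideanCLM_toLp]
  rw [euclidean_sum_normSq, euclidean_sum_normSq, ← happ, ← hy]
  have h0 : (0 : ℝ) ≤ ‖y‖ := norm_nonneg _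
  nlinarith [norm_nonneg (NormedSpace.exp ((t : ℂ) • T) y)]

end Transfer




/-- For every `t ≥ 0` and every Hermitian matrix `F`,
`‖exp(tJ) F (exp(tJ))ᴴ‖₁ ≤ ‖F‖₁`: the superoperator `exp(t 𝓛_J)` is a trace-norm
contraction on Hermitian matrices. -/
theorem traceNorm_exp_kraus_le {d κ : ℕ} (hd : 1 ≤ d) (hκ : 1 ≤ κ)
    (H : Matrix (Fin d) (Fin d) ℂ) (hH : H.IsHermitian)
    (L : Fin κ → Matrix (Fin d) (Fin d) ℂ)
    (Heff J : Matrix (Fin d) (Fin d) ℂ)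
    (hHeff : Heff = H - (Complex.I / 2) • ∑ k, (L k)ᴴ * L k)
    (hJ : J = -(Complex.I • Heff)) :
    ∀ t : ℝ, 0 ≤ t → ∀ F : Matrix (Fin d) (Fin d) ℂ, F.IsHermitian →
      traceNorm (NormedSpace.exp ((t : ℂ) • J) * F * (NormedSpace.exp ((t : ℂ) • J))ᴴ)
        ≤ traceNorm F := by
  intro t ht F hF
  set S : Matrix (Fin d) (Fin d) ℂ := ∑ k, (L k)ᴴ * L k with hS
  have hSherm : Sᴴ = S := by
    rw [hS]
    simp [Matrix.conjTranspose_sum, Matrix.conjTranspose_mul]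
  have hJJ : J + Jᴴ = -S := by
    rw [hJ, hHeff]
    rw [Matrix.conjTranspose_neg, Matrix.conjTranspose_smul, Matrix.conjTranspose_sub,
      Matrix.conjTranspose_smul, hH.eq, hSherm]
    simp only [smul_sub, smul_smul]
    rw [Complex.star_def]
    push_cast [Complex.conj_I]
    match_scalars <;> simp [map_ofNat] <;> ring_nf <;> exact Complex.I_sq
  have hdiss : ∀ y : EuclideanSpace ℂ (Fin d),
      (inner (𝕜 := ℂ) y ((Matrix.toEuclideanCLM (𝕜 := ℂ) J) y)).re ≤ 0 := by
    intro y
    set e := Matrix.toEuclideanCLM (𝕜 := ℂ) (n := Fin d) with he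
    set T := e J with hT
    have hTT : T + star T = e (J + Jᴴ) := by
      rw [map_add, ← map_star, Matrix.star_eq_conjTranspose]
    have h1 : inner (𝕜 := ℂ) y ((star T) y) = inner (𝕜 := ℂ) (T y) y := by
      rw [ContinuousLinearMap.star_eq_adjoint, ContinuousLinearMap.adjoint_inner_right]
    have h2 : (inner (𝕜 := ℂ) y ((T + star T) y)).re
        = 2 * (inner (𝕜 := ℂ) y (T y)).re := by
      rw [ContinuousLinearMap.add_apply, inner_add_right, h1]
      have h3 : inner (𝕜 := ℂ) (T y) y = starRingEnd ℂ (inner (𝕜 := ℂ) y (T y)) :=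
        (inner_conj_symm _ _).symm
      rw [h3, Complex.add_re, Complex.conj_re]
      ring
    have h4 : (inner (𝕜 := ℂ) y ((T + star T) y)).re ≤ 0 := by
      have hTTs : T + star T = - e S := by rw [hTT, hJJ, map_neg]
      have hES : e S = ∑ k, star (e (L k)) * e (L k) := by
        rw [hS, map_sum]
        refine Finset.sum_congr rfl fun k _ => ?_
        rw [← Matrix.star_eq_conjTranspose, map_mul, map_star]
      rw [hTTs, ContinuousLinearMap.neg_apply, inner_neg_right, Complex.neg_re, neg_nonpos,
        hES, ContinuousLinearMap.sum_apply, inner_sum, Complex.re_sum]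
      refine Finset.sum_nonneg fun k _ => ?_
      rw [ContinuousLinearMap.mul_apply, ContinuousLinearMap.star_eq_adjoint,
        ContinuousLinearMap.adjoint_inner_right]
      exact inner_self_nonneg (𝕜 := ℂ) (x := (e (L k)) y)
    linarith
  have hA := fun v => exp_matrix_contracts J hdiss ht v
  exact traceNorm_conj_le (NormedSpace.exp ((t : ℂ) • J)) hA F hF
end

section
/- Define the first-order Runge–Kutta scheme 𝓐(ρ) := ρ + Δt·𝓛(ρ). Then the following are equivalent: (i) for every density matrix ρ_0, Tr(σ_X · 𝓐^{∘k}(ρ_0)) → 0 and Tr(σ_Y · 𝓐^{∘k}(ρ_0)) → 0 as k → ∞; (ii) |z − 1| < 1. -/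
open Filter
open scoped Matrix ComplexOrder

/-- Absolute stability of the first-order Runge–Kutta scheme (Theorem 9 of the paper):
the off-diagonal observables decay for every density matrix iff `|z - 1| < 1`. -/
theorem abs_stability_RK1
    (a b Δt : ℝ) (ha : 0 < a) (hΔt : 0 < Δt) (z : ℂ)
    (hz : z = ((a : ℂ) + (b : ℂ) * Complex.I) * (Δt : ℂ))
    (σX σY σZ H L : Matrix (Fin 2) (Fin 2) ℂ)
    (hσX : σX = !![0, 1; 1, 0])
    (hσY : σY = !![0, -Complex.I; Complex.I, 0])
    (hσZ : σZ = !![1, 0; 0, -1])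
    (hH : H = ((b / 2 : ℝ) : ℂ) • σZ)
    (hL : L = (Real.sqrt (a / 2) : ℂ) • σZ)
    (𝓛 : Matrix (Fin 2) (Fin 2) ℂ → Matrix (Fin 2) (Fin 2) ℂ)
    (h𝓛 : 𝓛 = fun ρ => -Complex.I • (H * ρ - ρ * H) + L * ρ * Lᴴ
        - (1 / 2 : ℂ) • (Lᴴ * L * ρ + ρ * (Lᴴ * L)))
    (𝓐 : Matrix (Fin 2) (Fin 2) ℂ → Matrix (Fin 2) (Fin 2) ℂ)
    (h𝓐 : 𝓐 = fun ρ => ρ + (Δt : ℂ) • 𝓛 ρ) :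
    (∀ ρ0 : Matrix (Fin 2) (Fin 2) ℂ, ρ0.PosSemidef → ρ0.trace = 1 →
        Tendsto (fun k => (σX * 𝓐^[k] ρ0).trace) atTop (nhds 0) ∧
        Tendsto (fun k => (σY * 𝓐^[k] ρ0).trace) atTop (nhds 0))
      ↔ ‖z - 1‖ < 1 := by
  -- Single-step action of 𝓐 on the off-diagonal entries.
  have hstep : ∀ M : Matrix (Fin 2) (Fin 2) ℂ, 𝓐 M 0 1 = (1 - z) * M 0 1 ∧
      𝓐 M 1 0 = (starRingEnd ℂ) (1 - z) * M 1 0 := by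
    intro M
    subst h𝓐 h𝓛 hH hL hσZ hz
    constructor <;>
    · simp [Matrix.mul_apply, Matrix.vecMul, dotProduct, Fin.sum_univ_two,
        Matrix.conjTranspose_apply, Complex.conj_ofReal, Matrix.vecHead, Matrix.vecTail]
      ring_nf
      rw [show ((Real.sqrt a : ℂ))^2 = (a:ℂ) by rw [← Complex.ofReal_pow, Real.sq_sqrt ha.le],
        inv_pow, show ((Real.sqrt 2 : ℂ))^2 = (2:ℂ) by
          rw [← Complex.ofReal_pow, Real.sq_sqrt (by norm_num)]; norm_num]
      ring
  -- Iterated action.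
  have hiter : ∀ (ρ : Matrix (Fin 2) (Fin 2) ℂ) (k : ℕ),
      (𝓐^[k] ρ) 0 1 = (1 - z) ^ k * ρ 0 1 ∧
      (𝓐^[k] ρ) 1 0 = ((starRingEnd ℂ) (1 - z)) ^ k * ρ 1 0 := by
    intro ρ k
    induction k with
    | zero => simp
    | succ n ih =>
      rw [Function.iterate_succ_apply']
      exact ⟨by rw [(hstep _).1, ih.1]; ring, by rw [(hstep _).2, ih.2]; ring⟩
  -- Traces of σX, σY against the iterates.
  have htr : ∀ (ρ : Matrix (Fin 2) (Fin 2) ℂ) (k : ℕ),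
      (σX * 𝓐^[k] ρ).trace = (1 - z) ^ k * ρ 0 1 + ((starRingEnd ℂ) (1 - z)) ^ k * ρ 1 0 ∧
      (σY * 𝓐^[k] ρ).trace = Complex.I * ((1 - z) ^ k * ρ 0 1)
        - Complex.I * (((starRingEnd ℂ) (1 - z)) ^ k * ρ 1 0) := by
    intro ρ k
    obtain ⟨h1, h2⟩ := hiter ρ k
    subst hσX hσY
    constructor <;>
    · simp [Matrix.trace, Matrix.mul_apply, Fin.sum_univ_two, Matrix.diag, h1, h2]
      ring
  constructor
  · -- (i) → (ii): test against the density matrix (1/2)·ones.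
    intro h
    set ρ0 : Matrix (Fin 2) (Fin 2) ℂ := !![1/2, 1/2; 1/2, 1/2] with hρ0
    have e01 : ρ0 0 1 = 1/2 := by norm_num [hρ0]
    have e10 : ρ0 1 0 = 1/2 := by norm_num [hρ0]
    have hpsd : ρ0.PosSemidef := by
      refine Matrix.posSemidef_iff_dotProduct_mulVec.mpr ⟨?_, ?_⟩
      · ext i j
        fin_cases i <;> fin_cases j <;> simp [hρ0] <;> norm_num
      · intro x
        have key : star x ⬝ᵥ ρ0 *ᵥ x
            = (x 0 + x 1) * (starRingEnd ℂ) (x 0 + x 1) / 2 := by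
          simp [hρ0, dotProduct, Matrix.mulVec, Fin.sum_univ_two, Matrix.vecHead, Matrix.vecTail]
          ring
        rw [key, Complex.mul_conj,
          show ((Complex.normSq (x 0 + x 1) : ℂ)) / 2
              = ((Complex.normSq (x 0 + x 1) / 2 : ℝ) : ℂ) by push_cast; ring]
        exact Complex.zero_le_real.mpr (div_nonneg (Complex.normSq_nonneg _) (by norm_num))
    have htr1 : ρ0.trace = 1 := by
      simp [Matrix.trace, Fin.sum_univ_two, Matrix.diag, hρ0]
      norm_num
    obtain ⟨hX, hY⟩ := h ρ0 hpsd htr1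
    have hzero : Tendsto (fun k => (1 - z) ^ k) atTop (nhds 0) := by
      have hcomb := hX.sub (hY.const_mul Complex.I)
      simp only [mul_zero, sub_zero] at hcomb
      have heq : (fun k => (σX * 𝓐^[k] ρ0).trace - Complex.I * (σY * 𝓐^[k] ρ0).trace)
          = fun k => (1 - z) ^ k := by
        funext k
        rw [(htr ρ0 k).1, (htr ρ0 k).2, e01, e10]
        linear_combination (-((1 - z) ^ k - ((starRingEnd ℂ) (1 - z)) ^ k) / 2) * Complex.I_sq
      rwa [heq] at hcomb
    have hnorm : Tendsto (fun k => ‖(1 : ℂ) - z‖ ^ k) atTop (nhds 0) := by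
      simpa [norm_pow] using hzero.norm
    have hlt : ‖(1 : ℂ) - z‖ < 1 := by
      have := (tendsto_pow_atTop_nhds_zero_iff).mp hnorm
      rwa [abs_of_nonneg (norm_nonneg _)] at this
    rwa [show z - 1 = -(1 - z) by ring, norm_neg]
  · -- (ii) → (i)
    intro habs ρ0 _ _
    have hw : ‖(1 : ℂ) - z‖ < 1 := by
      rwa [show z - 1 = -(1 - z) by ring, norm_neg] at habs
    have h1 : Tendsto (fun k => (1 - z) ^ k) atTop (nhds 0) :=
      tendsto_pow_atTop_nhds_zero_of_norm_lt_one hw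
    have h2 : Tendsto (fun k => ((starRingEnd ℂ) (1 - z)) ^ k) atTop (nhds 0) :=
      tendsto_pow_atTop_nhds_zero_of_norm_lt_one (by rwa [RCLike.norm_conj])
    constructor
    · have heq : (fun k => (σX * 𝓐^[k] ρ0).trace)
          = fun k => (1 - z) ^ k * ρ0 0 1 + ((starRingEnd ℂ) (1 - z)) ^ k * ρ0 1 0 :=
        funext fun k => (htr ρ0 k).1
      rw [heq]
      simpa using (h1.mul_const (ρ0 0 1)).add (h2.mul_const (ρ0 1 0))
    · have heq : (fun k => (σY * 𝓐^[k] ρ0).trace)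
          = fun k => Complex.I * ((1 - z) ^ k * ρ0 0 1)
            - Complex.I * (((starRingEnd ℂ) (1 - z)) ^ k * ρ0 1 0) :=
        funext fun k => (htr ρ0 k).2
      rw [heq]
      simpa using ((h1.mul_const (ρ0 0 1)).const_mul Complex.I).sub
        ((h2.mul_const (ρ0 1 0)).const_mul Complex.I)
end

section
/- Define the second-order Runge–Kutta scheme 𝓐(ρ) := ρ + Δt·𝓛(ρ) + (Δt²/2)·𝓛(𝓛(ρ)). Then the following are equivalent: (i) for every density matrix ρ_0, Tr(σ_X · 𝓐^{∘k}(ρ_0)) → 0 and Tr(σ_Y · 𝓐^{∘k}(ρ_0)) → 0 as k → ∞; (ii) |z²/2 − z + 1| < 1. -/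
open Filter
open scoped Matrix ComplexOrder

/-- Absolute stability of the second-order Runge–Kutta scheme (Theorem 9 of the paper):
the off-diagonal observables decay for every density matrix iff `|z²/2 - z + 1| < 1`. -/
theorem abs_stability_RK2
    (a b Δt : ℝ) (ha : 0 < a) (hΔt : 0 < Δt) (z : ℂ)
    (hz : z = ((a : ℂ) + (b : ℂ) * Complex.I) * (Δt : ℂ))
    (σX σY σZ H L : Matrix (Fin 2) (Fin 2) ℂ)
    (hσX : σX = !![0, 1; 1, 0])
    (hσY : σY = !![0, -Complex.I; Complex.I, 0])
    (hσZ : σZ = !![1, 0; 0, -1])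
    (hH : H = ((b / 2 : ℝ) : ℂ) • σZ)
    (hL : L = (Real.sqrt (a / 2) : ℂ) • σZ)
    (𝓛 : Matrix (Fin 2) (Fin 2) ℂ → Matrix (Fin 2) (Fin 2) ℂ)
    (h𝓛 : 𝓛 = fun ρ => -Complex.I • (H * ρ - ρ * H) + L * ρ * Lᴴ
        - (1 / 2 : ℂ) • (Lᴴ * L * ρ + ρ * (Lᴴ * L)))
    (𝓐 : Matrix (Fin 2) (Fin 2) ℂ → Matrix (Fin 2) (Fin 2) ℂ)
    (h𝓐 : 𝓐 = fun ρ => ρ + (Δt : ℂ) • 𝓛 ρ + ((Δt : ℂ) ^ 2 / 2) • 𝓛 (𝓛 ρ)) :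
    (∀ ρ0 : Matrix (Fin 2) (Fin 2) ℂ, ρ0.PosSemidef → ρ0.trace = 1 →
        Tendsto (fun k => (σX * 𝓐^[k] ρ0).trace) atTop (nhds 0) ∧
        Tendsto (fun k => (σY * 𝓐^[k] ρ0).trace) atTop (nhds 0))
      ↔ ‖z ^ 2 / 2 - z + 1‖ < 1 := by
  have hsq : ((Real.sqrt (a / 2) : ℝ) : ℂ) * ((Real.sqrt (a / 2) : ℝ) : ℂ) = ((a : ℂ)/2) := by
    rw [← Complex.ofReal_mul, Real.mul_self_sqrt (by linarith)]; push_cast; ring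
  set c : ℂ := (a : ℂ) + (b : ℂ) * Complex.I with hc
  set c' : ℂ := (a : ℂ) - (b : ℂ) * Complex.I with hc'
  set w : ℂ := z ^ 2 / 2 - z + 1 with hw
  set w' : ℂ := (starRingEnd ℂ) w with hw'
  have hconjc : (starRingEnd ℂ) c = c' := by
    rw [hc, hc', map_add, map_mul, Complex.conj_ofReal, Complex.conj_ofReal, Complex.conj_I]
    ring
  have hconjz : (starRingEnd ℂ) z = c' * (Δt : ℂ) := by
    rw [hz, map_mul, hconjc, Complex.conj_ofReal]
  have hconjw : w' = (c' * (Δt : ℂ)) ^ 2 / 2 - c' * (Δt : ℂ) + 1 := by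
    rw [hw', hw, map_add, map_sub, map_div₀, map_pow, map_one, map_ofNat, hconjz]
  have hnw' : ‖w'‖ = ‖w‖ := by rw [hw']; exact RCLike.norm_conj w
  -- entries of 𝓛 on a generic literal matrix
  have L00 : ∀ p q r s : ℂ, (𝓛 !![p, q; r, s]) 0 0 = 0 := by
    intro p q r s
    simp only [h𝓛, hL, hH, hσZ]
    simp only [Matrix.add_apply, Matrix.sub_apply, Matrix.smul_apply, Matrix.mul_apply,
      Matrix.conjTranspose_apply, Fin.sum_univ_two, Matrix.of_apply, Matrix.cons_val',
      Matrix.cons_val_zero, Matrix.cons_val_one, Matrix.head_cons, Matrix.head_fin_const,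
      Matrix.empty_val', Matrix.cons_val_fin_one, smul_eq_mul, map_mul, Complex.conj_ofReal,
      map_one, map_neg, map_zero, Complex.star_def, mul_zero, star_zero, Fin.isValue]
    push_cast
    ring
  have L11 : ∀ p q r s : ℂ, (𝓛 !![p, q; r, s]) 1 1 = 0 := by
    intro p q r s
    simp only [h𝓛, hL, hH, hσZ]
    simp only [Matrix.add_apply, Matrix.sub_apply, Matrix.smul_apply, Matrix.mul_apply,
      Matrix.conjTranspose_apply, Fin.sum_univ_two, Matrix.of_apply, Matrix.cons_val',
      Matrix.cons_val_zero, Matrix.cons_val_one, Matrix.head_cons, Matrix.head_fin_const,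
      Matrix.empty_val', Matrix.cons_val_fin_one, smul_eq_mul, map_mul, Complex.conj_ofReal,
      map_one, map_neg, map_zero, Complex.star_def, mul_zero, star_zero, Fin.isValue]
    push_cast
    ring
  have L01 : ∀ p q r s : ℂ, (𝓛 !![p, q; r, s]) 0 1 = (-c) * q := by
    intro p q r s
    have h2 := hsq
    simp only [h𝓛, hL, hH, hσZ, hc]
    simp only [Matrix.add_apply, Matrix.sub_apply, Matrix.smul_apply, Matrix.mul_apply,
      Matrix.conjTranspose_apply, Fin.sum_univ_two, Matrix.of_apply, Matrix.cons_val',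
      Matrix.cons_val_zero, Matrix.cons_val_one, Matrix.head_cons, Matrix.head_fin_const,
      Matrix.empty_val', Matrix.cons_val_fin_one, smul_eq_mul, map_mul, Complex.conj_ofReal,
      map_one, map_neg, map_zero, Complex.star_def, mul_zero, star_zero, Fin.isValue]
    push_cast
    ring_nf at h2 ⊢
    rw [h2]
    ring
  have L10 : ∀ p q r s : ℂ, (𝓛 !![p, q; r, s]) 1 0 = (-c') * r := by
    intro p q r s
    have h2 := hsq
    simp only [h𝓛, hL, hH, hσZ, hc']
    simp only [Matrix.add_apply, Matrix.sub_apply, Matrix.smul_apply, Matrix.mul_apply,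
      Matrix.conjTranspose_apply, Fin.sum_univ_two, Matrix.of_apply, Matrix.cons_val',
      Matrix.cons_val_zero, Matrix.cons_val_one, Matrix.head_cons, Matrix.head_fin_const,
      Matrix.empty_val', Matrix.cons_val_fin_one, smul_eq_mul, map_mul, Complex.conj_ofReal,
      map_one, map_neg, map_zero, Complex.star_def, mul_zero, star_zero, Fin.isValue]
    push_cast
    ring_nf at h2 ⊢
    rw [h2]
    ring
  have hLmat : ∀ p q r s : ℂ, 𝓛 !![p, q; r, s] = !![0, (-c) * q; (-c') * r, 0] := by
    intro p q r s
    rw [Matrix.eta_fin_two (𝓛 !![p, q; r, s]), L00, L01, L10, L11]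
  -- entries of 𝓐 on a generic literal matrix
  have hA01 : ∀ p q r s : ℂ, (𝓐 !![p, q; r, s]) 0 1 = w * q := by
    intro p q r s
    simp only [h𝓐, hLmat]
    simp only [Matrix.add_apply, Matrix.smul_apply, Matrix.of_apply, Matrix.cons_val',
      Matrix.cons_val_zero, Matrix.cons_val_one, Matrix.head_cons, Matrix.empty_val',
      Matrix.cons_val_fin_one, smul_eq_mul, Fin.isValue, Matrix.vecHead, Matrix.vecTail]
    rw [hw, hz]
    ring
  have hA10 : ∀ p q r s : ℂ, (𝓐 !![p, q; r, s]) 1 0 = w' * r := by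
    intro p q r s
    simp only [h𝓐, hLmat]
    simp only [Matrix.add_apply, Matrix.smul_apply, Matrix.of_apply, Matrix.cons_val',
      Matrix.cons_val_zero, Matrix.cons_val_one, Matrix.head_cons, Matrix.empty_val',
      Matrix.cons_val_fin_one, smul_eq_mul, Fin.isValue, Matrix.vecHead, Matrix.vecTail]
    rw [hconjw]
    ring
  have key : ∀ M : Matrix (Fin 2) (Fin 2) ℂ,
      (𝓐 M) 0 1 = w * M 0 1 ∧ (𝓐 M) 1 0 = w' * M 1 0 := by
    intro M
    have h1 := hA01 (M 0 0) (M 0 1) (M 1 0) (M 1 1)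
    have h2 := hA10 (M 0 0) (M 0 1) (M 1 0) (M 1 1)
    rw [← Matrix.eta_fin_two M] at h1 h2
    exact ⟨h1, h2⟩
  have hiter : ∀ (k : ℕ) (M : Matrix (Fin 2) (Fin 2) ℂ),
      (𝓐^[k] M) 0 1 = w ^ k * M 0 1 ∧ (𝓐^[k] M) 1 0 = w' ^ k * M 1 0 := by
    intro k
    induction k with
    | zero => intro M; simp
    | succ k ih =>
      intro M
      rw [Function.iterate_succ_apply]
      obtain ⟨h1, h2⟩ := ih (𝓐 M)
      obtain ⟨g1, g2⟩ := key M
      rw [h1, h2, g1, g2]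
      constructor <;> ring
  have trX : ∀ M : Matrix (Fin 2) (Fin 2) ℂ, (σX * M).trace = M 1 0 + M 0 1 := by
    intro M
    rw [hσX, Matrix.trace_fin_two]
    simp only [Matrix.mul_apply, Fin.sum_univ_two, Matrix.of_apply, Matrix.cons_val',
      Matrix.cons_val_zero, Matrix.cons_val_one, Matrix.head_cons, Matrix.empty_val',
      Matrix.cons_val_fin_one, Fin.isValue, Matrix.vecHead, Matrix.vecTail]
    ring
  have trY : ∀ M : Matrix (Fin 2) (Fin 2) ℂ,
      (σY * M).trace = -Complex.I * M 1 0 + Complex.I * M 0 1 := by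
    intro M
    rw [hσY, Matrix.trace_fin_two]
    simp only [Matrix.mul_apply, Fin.sum_univ_two, Matrix.of_apply, Matrix.cons_val',
      Matrix.cons_val_zero, Matrix.cons_val_one, Matrix.head_cons, Matrix.empty_val',
      Matrix.cons_val_fin_one, Fin.isValue, Matrix.vecHead, Matrix.vecTail]
    ring
  constructor
  · -- forward
    intro h
    set ρ0 : Matrix (Fin 2) (Fin 2) ℂ := !![1/2, 1/2; 1/2, 1/2] with hρ0
    have e01 : ρ0 0 1 = 1/2 := by rw [hρ0]; simp
    have e10 : ρ0 1 0 = 1/2 := by rw [hρ0]; simp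
    have hpsd : ρ0.PosSemidef := by
      refine Matrix.PosSemidef.of_dotProduct_mulVec_nonneg ?_ ?_
      · rw [hρ0]
        ext i j
        fin_cases i <;> fin_cases j <;>
          simp [Matrix.conjTranspose_apply]
      · intro x
        have hx : (star x) ⬝ᵥ (ρ0 *ᵥ x) = (1/2 : ℂ) * (star (x 0 + x 1) * (x 0 + x 1)) := by
          rw [hρ0]
          simp only [dotProduct, Matrix.mulVec, Fin.sum_univ_two, Pi.star_apply,
            Matrix.of_apply, Matrix.cons_val', Matrix.cons_val_zero, Matrix.cons_val_one,
            Matrix.head_cons, Matrix.empty_val', Matrix.cons_val_fin_one, Fin.isValue,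
            Complex.star_def, map_add, Matrix.vecHead, Matrix.vecTail]
          ring
        rw [hx]
        have h1 : (0 : ℂ) ≤ star (x 0 + x 1) * (x 0 + x 1) := star_mul_self_nonneg _
        have h2 : (0 : ℂ) ≤ (1/2 : ℂ) := by rw [Complex.le_def]; norm_num
        exact mul_nonneg h2 h1
    have htr : ρ0.trace = 1 := by
      rw [hρ0, Matrix.trace_fin_two]
      norm_num
    obtain ⟨hX, hY⟩ := h ρ0 hpsd htr
    have hcomb : Tendsto (fun k => (σX * 𝓐^[k] ρ0).trace
        - Complex.I * (σY * 𝓐^[k] ρ0).trace) atTop (nhds 0) := by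
      have := hX.sub ((hY.const_mul Complex.I))
      simpa using this
    have heq : (fun k => (σX * 𝓐^[k] ρ0).trace
        - Complex.I * (σY * 𝓐^[k] ρ0).trace) = fun k => w ^ k := by
      funext k
      obtain ⟨h1, h2⟩ := hiter k ρ0
      rw [trX, trY, h1, h2, e01, e10]
      have hI : Complex.I * Complex.I = -1 := Complex.I_mul_I
      linear_combination (w' ^ k / 2 - w ^ k / 2) * hI
    rw [heq] at hcomb
    have hn : Tendsto (fun k => ‖w‖ ^ k) atTop (nhds 0) := by
      have := hcomb.norm
      simpa [norm_pow] using this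
    have hlt := tendsto_pow_atTop_nhds_zero_iff.mp hn
    rw [abs_of_nonneg (norm_nonneg w)] at hlt
    exact hlt
  · -- backward
    intro hlt ρ0 _ _
    have hlt' : ‖w'‖ < 1 := by rwa [hnw']
    have t1 : Tendsto (fun k => w ^ k) atTop (nhds 0) :=
      tendsto_pow_atTop_nhds_zero_of_norm_lt_one hlt
    have t2 : Tendsto (fun k => w' ^ k) atTop (nhds 0) :=
      tendsto_pow_atTop_nhds_zero_of_norm_lt_one hlt'
    constructor
    · have hT : Tendsto (fun k => w' ^ k * ρ0 1 0 + w ^ k * ρ0 0 1) atTop (nhds 0) := by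
        simpa using (t2.mul_const (ρ0 1 0)).add (t1.mul_const (ρ0 0 1))
      refine hT.congr fun k => ?_
      obtain ⟨h1, h2⟩ := hiter k ρ0
      rw [trX, h1, h2]
    · have hT : Tendsto (fun k => -Complex.I * (w' ^ k * ρ0 1 0)
          + Complex.I * (w ^ k * ρ0 0 1)) atTop (nhds 0) := by
        simpa using ((t2.mul_const (ρ0 1 0)).const_mul (-Complex.I)).add
          ((t1.mul_const (ρ0 0 1)).const_mul Complex.I)
      refine hT.congr fun k => ?_
      obtain ⟨h1, h2⟩ := hiter k ρ0
      rw [trY, h1, h2]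
end

section
/- Define the normalized trapezoidal second-order structure-preserving scheme by 𝓐_un(ρ) := (I + ΔtJ + (Δt²/2)J²) · ρ · (I + ΔtJ + (Δt²/2)J²)ᴴ + (Δt/2) · (I + ΔtJ) · (L ρ Lᴴ) · (I + ΔtJ)ᴴ + (Δt/2) · L · ((I + ΔtJ) · ρ · (I + ΔtJ)ᴴ) · Lᴴ + (Δt²/2) · L (L ρ Lᴴ) Lᴴ and 𝓐(ρ) := 𝓐_un(ρ)/Tr(𝓐_un(ρ)). Then the following are equivalent: (i) for every density matrix ρ_0, Tr(σ_X · 𝓐^{∘k}(ρ_0)) → 0 and Tr(σ_Y · 𝓐^{∘k}(ρ_0)) → 0 as k → ∞; (ii) a·Δt ≠ 4 (that is, Re(z) ≠ 4). -/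
open Filter
open scoped Matrix ComplexOrder

private lemma abs_sub_sq_lt (D E : ℝ) (hD : 0 < D) (hE : 0 < E) (n : ℂ) (hn : n.re ≠ 0) :
    ‖(D : ℂ) - (E : ℂ) * n ^ 2‖ < D + E * Complex.normSq n := by
  have hre : (0:ℝ) < n.re ^ 2 := (sq_nonneg n.re).lt_of_ne (Ne.symm (pow_ne_zero 2 hn))
  have h2 : Complex.normSq ((D : ℂ) - (E : ℂ) * n ^ 2)
      < (D + E * Complex.normSq n) ^ 2 := by
    simp [Complex.normSq_apply, Complex.sub_re, Complex.sub_im, Complex.mul_re,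
      Complex.mul_im, Complex.ofReal_re, Complex.ofReal_im, pow_two]
    nlinarith [sq_nonneg n.re, sq_nonneg n.im, sq_nonneg (n.re * n.im),
      mul_pos hD hE, hre, mul_pos (mul_pos hD hE) hre]
  have hpos : 0 < D + E * Complex.normSq n := by
    have := Complex.normSq_nonneg n
    nlinarith
  calc ‖(D : ℂ) - (E : ℂ) * n ^ 2‖
      = Real.sqrt (Complex.normSq ((D : ℂ) - (E : ℂ) * n ^ 2)) := Complex.norm_def _
    _ < Real.sqrt ((D + E * Complex.normSq n) ^ 2) :=
        Real.sqrt_lt_sqrt (Complex.normSq_nonneg _) h2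
    _ = D + E * Complex.normSq n := Real.sqrt_sq hpos.le

private lemma fin2_conj_diag (p q r s : ℂ) (ρ : Matrix (Fin 2) (Fin 2) ℂ) :
    !![p, 0; 0, q] * ρ * !![r, 0; 0, s]
      = !![p * ρ 0 0 * r, p * ρ 0 1 * s; q * ρ 1 0 * r, q * ρ 1 1 * s] := by
  ext i k
  fin_cases i <;> fin_cases k <;>
    simp [Matrix.mul_apply, Matrix.vecMul, dotProduct, Fin.sum_univ_two] <;> ring

private lemma fin2_ct (p q : ℂ) : (!![p, 0; 0, q])ᴴ = !![star p, 0; 0, star q] := by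
  ext i k
  fin_cases i <;> fin_cases k <;> simp [Matrix.conjTranspose_apply]

set_option maxHeartbeats 1000000 in
/-- Absolute stability of the normalized trapezoidal second-order structure-preserving
scheme (Theorem 9 of the paper): decay holds for every density matrix iff `Re(z) = aΔt ≠ 4`. -/
theorem abs_stability_SP2_TR
    (a b Δt : ℝ) (ha : 0 < a) (hΔt : 0 < Δt) (z : ℂ)
    (hz : z = ((a : ℂ) + (b : ℂ) * Complex.I) * (Δt : ℂ))
    (σX σY σZ H L : Matrix (Fin 2) (Fin 2) ℂ)
    (hσX : σX = !![0, 1; 1, 0])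
    (hσY : σY = !![0, -Complex.I; Complex.I, 0])
    (hσZ : σZ = !![1, 0; 0, -1])
    (hH : H = ((b / 2 : ℝ) : ℂ) • σZ)
    (hL : L = (Real.sqrt (a / 2) : ℂ) • σZ)
    (𝓛 : Matrix (Fin 2) (Fin 2) ℂ → Matrix (Fin 2) (Fin 2) ℂ)
    (h𝓛 : 𝓛 = fun ρ => -Complex.I • (H * ρ - ρ * H) + L * ρ * Lᴴ
        - (1 / 2 : ℂ) • (Lᴴ * L * ρ + ρ * (Lᴴ * L)))
    (Heff J : Matrix (Fin 2) (Fin 2) ℂ)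
    (hHeff : Heff = H - (Complex.I / 2) • (Lᴴ * L))
    (hJ : J = -(Complex.I • Heff))
    (𝓐un 𝓐 : Matrix (Fin 2) (Fin 2) ℂ → Matrix (Fin 2) (Fin 2) ℂ)
    (h𝓐un : 𝓐un = fun ρ =>
      (1 + Δt • J + (Δt ^ 2 / 2) • J ^ 2) * ρ * (1 + Δt • J + (Δt ^ 2 / 2) • J ^ 2)ᴴ
        + (Δt / 2) • ((1 + Δt • J) * (L * ρ * Lᴴ) * (1 + Δt • J)ᴴ)
        + (Δt / 2) • (L * ((1 + Δt • J) * ρ * (1 + Δt • J)ᴴ) * Lᴴ)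
        + (Δt ^ 2 / 2) • (L * (L * ρ * Lᴴ) * Lᴴ))
    (h𝓐 : 𝓐 = fun ρ => ((𝓐un ρ).trace)⁻¹ • 𝓐un ρ) :
    (∀ ρ0 : Matrix (Fin 2) (Fin 2) ℂ, ρ0.PosSemidef → ρ0.trace = 1 →
        Tendsto (fun k => (σX * 𝓐^[k] ρ0).trace) atTop (nhds 0) ∧
        Tendsto (fun k => (σY * 𝓐^[k] ρ0).trace) atTop (nhds 0))
      ↔ a * Δt ≠ 4 := by
  classical
  set c : ℝ := Real.sqrt (a / 2) with hcdef
  have hcpos : 0 < c := Real.sqrt_pos.mpr (by linarith)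
  have hc2 : c ^ 2 = a / 2 := Real.sq_sqrt (by linarith)
  obtain ⟨j1, hj1⟩ : ∃ x : ℂ, x = -((a:ℂ)/4) - ((b:ℂ)/2) * Complex.I := ⟨_, rfl⟩
  obtain ⟨j2, hj2⟩ : ∃ x : ℂ, x = -((a:ℂ)/4) + ((b:ℂ)/2) * Complex.I := ⟨_, rfl⟩
  obtain ⟨m1, hm1⟩ : ∃ x : ℂ, x = 1 + (Δt:ℂ) * j1 + ((Δt:ℂ)^2/2) * j1^2 := ⟨_, rfl⟩
  obtain ⟨m2, hm2⟩ : ∃ x : ℂ, x = 1 + (Δt:ℂ) * j2 + ((Δt:ℂ)^2/2) * j2^2 := ⟨_, rfl⟩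
  obtain ⟨n1, hn1⟩ : ∃ x : ℂ, x = 1 + (Δt:ℂ) * j1 := ⟨_, rfl⟩
  obtain ⟨n2, hn2⟩ : ∃ x : ℂ, x = 1 + (Δt:ℂ) * j2 := ⟨_, rfl⟩
  obtain ⟨A, hA⟩ : ∃ x : ℂ,
      x = m1 * m2 + (Δt:ℂ) * (c:ℂ)^2 * (n1 * n2) + (Δt:ℂ)^2 * (c:ℂ)^4 / 2 := ⟨_, rfl⟩
  obtain ⟨B1, hB1⟩ : ∃ x : ℂ,
      x = m1^2 - (Δt:ℂ) * (c:ℂ)^2 * n1^2 + (Δt:ℂ)^2 * (c:ℂ)^4 / 2 := ⟨_, rfl⟩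
  obtain ⟨B2, hB2⟩ : ∃ x : ℂ,
      x = m2^2 - (Δt:ℂ) * (c:ℂ)^2 * n2^2 + (Δt:ℂ)^2 * (c:ℂ)^4 / 2 := ⟨_, rfl⟩
  have hsΔ : star ((Δt:ℝ):ℂ) = ((Δt:ℝ):ℂ) := Complex.conj_ofReal Δt
  have hsc : star ((c:ℝ):ℂ) = ((c:ℝ):ℂ) := Complex.conj_ofReal c
  -- star relations
  have hsa : star ((a:ℝ):ℂ) = ((a:ℝ):ℂ) := Complex.conj_ofReal a
  have hsb : star ((b:ℝ):ℂ) = ((b:ℝ):ℂ) := Complex.conj_ofReal b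
  have hsI : star Complex.I = -Complex.I := by
    simp [Complex.star_def, Complex.conj_I]
  have hsj : star j1 = j2 := by
    rw [hj1, hj2]
    simp only [star_sub, star_neg, star_mul', star_div₀, hsa, hsb, hsI, star_ofNat]
    ring
  have hsm : star m1 = m2 := by
    rw [hm1, hm2, ← hsj]
    simp only [star_add, star_mul', star_pow, star_div₀, star_one, hsΔ, star_ofNat]
  have hsm2 : star m2 = m1 := by rw [← hsm, star_star]
  have hsn : star n1 = n2 := by
    rw [hn1, hn2, ← hsj]
    simp only [star_add, star_mul', star_one, hsΔ]
  have hsn2 : star n2 = n1 := by rw [← hsn, star_star]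
  have hsB : star B1 = B2 := by
    rw [hB1, hB2]
    simp only [star_sub, star_add, star_mul', star_pow, star_div₀, hsm, hsn, hsΔ, hsc,
      star_ofNat]
  -- the diagonal form of the matrices
  have hJ' : J = !![j1, 0; 0, j2] := by
    rw [hJ, hHeff, hH, hL, hσZ]
    ext i k
    fin_cases i <;> fin_cases k <;>
      simp [Matrix.mul_apply, Fin.sum_univ_two, Matrix.conjTranspose_apply, hj1, hj2,
        Complex.ext_iff] <;>
      ring_nf <;> nlinarith [hc2, hcpos]
  have hL' : L = !![(c:ℂ), 0; 0, -(c:ℂ)] := by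
    rw [hL, hσZ]
    ext i k
    fin_cases i <;> fin_cases k <;> simp [hcdef]
  have hM : (1 : Matrix (Fin 2) (Fin 2) ℂ) + Δt • J + (Δt ^ 2 / 2) • J ^ 2
      = !![m1, 0; 0, m2] := by
    rw [hJ', Matrix.one_fin_two,
      pow_two (!![j1, 0; 0, j2] : Matrix (Fin 2) (Fin 2) ℂ), Matrix.mul_fin_two]
    ext i k
    fin_cases i <;> fin_cases k <;>
      simp [Matrix.add_apply, Matrix.smul_apply, Complex.real_smul, hm1, hm2]
    all_goals (first | (left; ring) | (push_cast; ring))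
  have hN : (1 : Matrix (Fin 2) (Fin 2) ℂ) + Δt • J = !![n1, 0; 0, n2] := by
    rw [hJ', Matrix.one_fin_two]
    ext i k
    fin_cases i <;> fin_cases k <;>
      simp [Matrix.add_apply, Matrix.smul_apply, Complex.real_smul, hn1, hn2]
  have hMH : (!![m1, 0; 0, m2])ᴴ = !![m2, 0; 0, m1] := by rw [fin2_ct, hsm, hsm2]
  have hNH : (!![n1, 0; 0, n2])ᴴ = !![n2, 0; 0, n1] := by rw [fin2_ct, hsn, hsn2]
  have hLH : (!![(c:ℂ), 0; 0, -(c:ℂ)])ᴴ = !![(c:ℂ), 0; 0, -(c:ℂ)] := by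
    rw [fin2_ct, star_neg, hsc]
  -- entries of 𝓐un
  have hAun : ∀ ρ : Matrix (Fin 2) (Fin 2) ℂ,
      𝓐un ρ = !![A * ρ 0 0, B1 * ρ 0 1; B2 * ρ 1 0, A * ρ 1 1] := by
    intro ρ
    simp only [h𝓐un]
    rw [hM, hN, hL', hMH, hNH, hLH]
    simp only [fin2_conj_diag]
    ext i k
    fin_cases i <;> fin_cases k <;>
      simp [Matrix.add_apply, Matrix.smul_apply, Complex.real_smul, hA, hB1, hB2] <;>
      push_cast <;> ring
  -- A is a positive real
  obtain ⟨Ar, hAr⟩ : ∃ x : ℝ,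
      x = Complex.normSq m1 + Δt * c^2 * Complex.normSq n1 + Δt^2 * c^4 / 2 := ⟨_, rfl⟩
  have hms : m1 * m2 = ((Complex.normSq m1 : ℝ) : ℂ) := by
    rw [← hsm]; exact Complex.mul_conj m1
  have hns : n1 * n2 = ((Complex.normSq n1 : ℝ) : ℂ) := by
    rw [← hsn]; exact Complex.mul_conj n1
  have hAreal : A = (Ar : ℂ) := by
    rw [hA, hAr, hms, hns]
    push_cast
    ring
  have hArpos : 0 < Ar := by
    rw [hAr]
    have h1 := Complex.normSq_nonneg m1
    have h2 := Complex.normSq_nonneg n1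
    have h3 : 0 < c^2 := by positivity
    have h4 : 0 < c^4 := by positivity
    have h5 : (0:ℝ) ≤ Δt * c^2 * Complex.normSq n1 :=
      mul_nonneg (mul_pos hΔt h3).le h2
    have h6 : (0:ℝ) < Δt^2 * c^4 / 2 := by positivity
    linarith
  have hAne : A ≠ 0 := by
    rw [hAreal]
    exact Complex.ofReal_ne_zero.mpr (ne_of_gt hArpos)
  -- trace of 𝓐un
  have htr : ∀ ρ : Matrix (Fin 2) (Fin 2) ℂ, (𝓐un ρ).trace = A * ρ.trace := by
    intro ρ
    rw [hAun ρ, Matrix.trace_fin_two, Matrix.trace_fin_two]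
    simp
    ring
  obtain ⟨μ, hμ⟩ : ∃ x : ℂ, x = B1 / A := ⟨_, rfl⟩
  have hμstar : star μ = B2 / A := by
    rw [hμ, star_div₀, hsB, hAreal, Complex.star_def, Complex.conj_ofReal]
  -- single application of 𝓐
  have hstep : ∀ ρ : Matrix (Fin 2) (Fin 2) ℂ, ρ.trace = 1 →
      𝓐 ρ = !![ρ 0 0, μ * ρ 0 1; star μ * ρ 1 0, ρ 1 1] := by
    intro ρ h1
    simp only [h𝓐]
    rw [htr ρ, h1, mul_one, hAun ρ, hμstar, hμ]
    ext i k
    fin_cases i <;> fin_cases k <;>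
      simp only [Matrix.smul_apply, smul_eq_mul, Matrix.cons_val', Matrix.cons_val_zero,
        Matrix.cons_val_one, Matrix.head_cons, Matrix.empty_val', Matrix.cons_val_fin_one,
        Matrix.head_fin_const, Fin.mk_one, Fin.zero_eta, Matrix.of_apply] <;>
      field_simp <;>
      try ring
  -- iterates of 𝓐
  have hiter : ∀ ρ0 : Matrix (Fin 2) (Fin 2) ℂ, ρ0.trace = 1 → ∀ k : ℕ,
      𝓐^[k] ρ0 = !![ρ0 0 0, μ^k * ρ0 0 1; (star μ)^k * ρ0 1 0, ρ0 1 1] := by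
    intro ρ0 h1 k
    induction k with
    | zero =>
      simp only [Function.iterate_zero_apply, pow_zero, one_mul]
      exact Matrix.eta_fin_two ρ0
    | succ k ih =>
      rw [Function.iterate_succ_apply', ih]
      have htr2 : (!![ρ0 0 0, μ^k * ρ0 0 1; (star μ)^k * ρ0 1 0, ρ0 1 1]
          : Matrix (Fin 2) (Fin 2) ℂ).trace = 1 := by
        rw [Matrix.trace_fin_two]
        show ρ0 0 0 + ρ0 1 1 = 1
        rw [← Matrix.trace_fin_two]
        exact h1
      rw [hstep _ htr2]
      ext i k'
      fin_cases i <;> fin_cases k' <;> simp [pow_succ] <;> ring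
  -- traces against the Pauli matrices
  have hXtr : ∀ ρ0 : Matrix (Fin 2) (Fin 2) ℂ, ρ0.trace = 1 → ∀ k : ℕ,
      (σX * 𝓐^[k] ρ0).trace = (star μ)^k * ρ0 1 0 + μ^k * ρ0 0 1 := by
    intro ρ0 h1 k
    rw [hiter ρ0 h1 k, hσX, Matrix.trace_fin_two]
    simp [Matrix.mul_apply, Matrix.vecMul, dotProduct, Fin.sum_univ_two]
  have hYtr : ∀ ρ0 : Matrix (Fin 2) (Fin 2) ℂ, ρ0.trace = 1 → ∀ k : ℕ,
      (σY * 𝓐^[k] ρ0).trace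
        = Complex.I * (μ^k * ρ0 0 1) - Complex.I * ((star μ)^k * ρ0 1 0) := by
    intro ρ0 h1 k
    rw [hiter ρ0 h1 k, hσY, Matrix.trace_fin_two]
    simp [Matrix.mul_apply, Matrix.vecMul, dotProduct, Fin.sum_univ_two]
    ring
  constructor
  · intro hfull
    by_contra h4
    have hq : (a:ℂ) * (Δt:ℂ) = 4 := by
      have := congrArg (fun x : ℝ => (x : ℂ)) h4
      push_cast at this
      exact this
    have hBA : B1 = A := by
      rw [hB1, hA, hm1, hm2, hn1, hn2, hj1, hj2]
      linear_combination ((Δt:ℂ)/4 * (b:ℂ) * Complex.I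
          * (1 + (Δt:ℂ) * (-((a:ℂ)/4) - ((b:ℂ)/2) * Complex.I)
            + ((Δt:ℂ)^2/2) * (-((a:ℂ)/4) - ((b:ℂ)/2) * Complex.I)^2)
        + (Δt:ℂ)/2 * (c:ℂ)^2
          * (1 + (Δt:ℂ) * (-((a:ℂ)/4) - ((b:ℂ)/2) * Complex.I))) * hq
    have hμ1 : μ = 1 := by rw [hμ, hBA, div_self hAne]
    have hμs1 : star μ = 1 := by rw [hμ1, star_one]
    set ρ0 : Matrix (Fin 2) (Fin 2) ℂ := !![1/2, 1/2; 1/2, 1/2] with hρ0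
    have hpsd : ρ0.PosSemidef := by
      rw [Matrix.posSemidef_iff_dotProduct_mulVec]
      constructor
      · ext i k
        fin_cases i <;> fin_cases k <;>
          simp [hρ0, Matrix.conjTranspose_apply]
      · intro x
        have hx : dotProduct (star x) (ρ0.mulVec x)
            = (1/2 : ℂ) * (star (x 0 + x 1) * (x 0 + x 1)) := by
          simp [hρ0, dotProduct, Matrix.mulVec, Fin.sum_univ_two, star_add]
          ring
        rw [hx]
        have h12 : (0:ℂ) ≤ 1/2 := by
          rw [Complex.le_def]
          norm_num
        exact mul_nonneg h12 (star_mul_self_nonneg _)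
    have htr0 : ρ0.trace = 1 := by
      rw [Matrix.trace_fin_two]
      norm_num [hρ0]
    obtain ⟨hX, -⟩ := hfull ρ0 hpsd htr0
    have hconst : ∀ k : ℕ, (σX * 𝓐^[k] ρ0).trace = 1 := by
      intro k
      rw [hXtr ρ0 htr0 k, hμs1, hμ1]
      norm_num [hρ0]
    have h01 : (0 : ℂ) = 1 :=
      tendsto_nhds_unique (hX.congr hconst) tendsto_const_nhds
    exact zero_ne_one h01
  · intro hne ρ0 _ htr1
    have hn1c : n1 = ((1 - Δt * a/4 : ℝ) : ℂ) + ((-(Δt * b/2) : ℝ) : ℂ) * Complex.I := by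
      rw [hn1, hj1]
      push_cast
      ring
    have hn1re : n1.re = 1 - Δt * a/4 := by
      rw [hn1c]
      simp
    have hn1ne : n1.re ≠ 0 := by
      rw [hn1re]
      intro h
      exact hne (by linarith)
    have hD : (0:ℝ) < Δt^2 * c^4/2 := by positivity
    have hE : (0:ℝ) < Δt * c^2 := by positivity
    have key := abs_sub_sq_lt (Δt^2*c^4/2) (Δt*c^2) hD hE n1 hn1ne
    have habsB : ‖B1‖ < Ar := by
      have hsplit : B1 = m1^2 + (((Δt^2*c^4/2 : ℝ):ℂ) - ((Δt*c^2 : ℝ):ℂ) * n1^2) := by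
        rw [hB1]
        push_cast
        ring
      have htri : ‖B1‖
          ≤ ‖m1^2‖
            + ‖((Δt^2*c^4/2 : ℝ):ℂ) - ((Δt*c^2 : ℝ):ℂ) * n1^2‖ := by
        rw [hsplit]
        exact norm_add_le _ _
      have h1 : ‖m1^2‖ = Complex.normSq m1 := by
        rw [norm_pow, Complex.sq_norm]
      rw [hAr]
      rw [h1] at htri
      linarith [key]
    have hμnorm : ‖μ‖ < 1 := by
      rw [hμ, norm_div, hAreal, Complex.norm_real, Real.norm_eq_abs,
        abs_of_pos hArpos]
      exact (div_lt_one hArpos).mpr habsB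
    have t1 : Tendsto (fun k : ℕ => μ^k) atTop (nhds 0) :=
      tendsto_pow_atTop_nhds_zero_of_norm_lt_one hμnorm
    have t2 : Tendsto (fun k : ℕ => (star μ)^k) atTop (nhds 0) :=
      tendsto_pow_atTop_nhds_zero_of_norm_lt_one (by rwa [norm_star])
    constructor
    · have h := (t2.mul_const (ρ0 1 0)).add (t1.mul_const (ρ0 0 1))
      simp only [zero_mul, add_zero] at h
      exact h.congr (fun k => (hXtr ρ0 htr1 k).symm)
    · have h := ((t1.mul_const (ρ0 0 1)).const_mul Complex.I).sub
        ((t2.mul_const (ρ0 1 0)).const_mul Complex.I)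
      simp only [zero_mul, mul_zero, sub_zero] at h
      exact h.congr (fun k => (hYtr ρ0 htr1 k).symm)
end

section
/- Define the normalized midpoint second-order structure-preserving scheme by 𝓐_un(ρ) := (I + ΔtJ + (Δt²/2)J²) · ρ · (I + ΔtJ + (Δt²/2)J²)ᴴ + Δt · (I + (Δt/2)J) · L · ((I + (Δt/2)J) · ρ · (I + (Δt/2)J)ᴴ) · Lᴴ · (I + (Δt/2)J)ᴴ + (Δt²/2) · L (L ρ Lᴴ) Lᴴ and 𝓐(ρ) := 𝓐_un(ρ)/Tr(𝓐_un(ρ)). Then the following are equivalent: (i) for every density matrix ρ_0, Tr(σ_X · 𝓐^{∘k}(ρ_0)) → 0 and Tr(σ_Y · 𝓐^{∘k}(ρ_0)) → 0 as k → ∞; (ii) z ≠ 4 + 2i and z ≠ 4 − 2i and z ≠ 8. -/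
open Filter
open scoped Matrix ComplexOrder

open ComplexConjugate

set_option maxHeartbeats 2000000

lemma SP2_aux (g : ℂ) (ℓ Δt : ℝ) (c n : ℂ)
    (hc : c = (1 + Δt*g + (Δt^2/2)*g^2) * conj (1 + Δt*g + (Δt^2/2)*g^2)
        + Δt*ℓ^2*((1+(Δt/2)*g) * conj (1+(Δt/2)*g))^2 + (Δt^2/2)*ℓ^4)
    (hn : n = (1 + Δt*g + (Δt^2/2)*g^2)^2 - Δt*ℓ^2*(1+(Δt/2)*g)^4 + (Δt^2/2)*ℓ^4)
    (ρ : Matrix (Fin 2) (Fin 2) ℂ)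
    (J L : Matrix (Fin 2) (Fin 2) ℂ)
    (hJ : J = !![g, 0; 0, conj g]) (hL : L = !![(ℓ:ℂ), 0; 0, -ℓ]) :
    (1 + Δt • J + (Δt ^ 2 / 2) • J ^ 2) * ρ * (1 + Δt • J + (Δt ^ 2 / 2) • J ^ 2)ᴴ
        + Δt • ((1 + (Δt / 2) • J) * L
            * ((1 + (Δt / 2) • J) * ρ * (1 + (Δt / 2) • J)ᴴ)
            * Lᴴ * (1 + (Δt / 2) • J)ᴴ)
        + (Δt ^ 2 / 2) • (L * (L * ρ * Lᴴ) * Lᴴ)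
      = !![c * ρ 0 0, n * ρ 0 1; conj n * ρ 1 0, c * ρ 1 1] := by
  subst hJ hL hc hn
  ext i j
  fin_cases i <;> fin_cases j <;>
    simp [Matrix.mul_apply, Fin.sum_univ_two, Matrix.conjTranspose_apply, pow_two,
      Matrix.one_apply, map_add, _root_.map_mul, map_pow, map_ofNat, Complex.conj_ofReal,
      -Matrix.cons_mul, -Matrix.cons_vecMul, -Matrix.vecMul_cons] <;> ring

lemma SP2_scalar (x y : ℝ) (hx : 0 < x) (NUM : ℂ) (CR : ℝ)
    (hNUM : NUM = (((1 - x/4 + x^2/32 - y^2/8 : ℝ) : ℂ) + ((x*y/8 - y/2 : ℝ) : ℂ) * Complex.I)^2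
        - ((x/2 : ℝ) : ℂ) * (((1 - x/8 : ℝ) : ℂ) + ((-(y/4) : ℝ) : ℂ) * Complex.I)^4
        + ((x^2/8 : ℝ) : ℂ))
    (hCR : CR = ((1 - x/4 + x^2/32 - y^2/8)^2 + (x*y/8 - y/2)^2)
        + (x/2) * ((1 - x/8)^2 + (-(y/4))^2)^2 + x^2/8) :
    (0 < CR) ∧
    (¬(x = 4 ∧ y = 2) → ¬(x = 4 ∧ y = -2) → ¬(x = 8 ∧ y = 0) → ‖NUM‖ < CR) ∧
    ((x = 4 ∧ y = 2) ∨ (x = 4 ∧ y = -2) ∨ (x = 8 ∧ y = 0) → NUM = ↑CR) := by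
  have hCR0 : 0 < CR := by
    rw [hCR]
    nlinarith [sq_nonneg (1 - x/4 + x^2/32 - y^2/8), sq_nonneg (x*y/8 - y/2), sq_nonneg x,
      mul_nonneg hx.le (sq_nonneg ((1 - x/8)^2 + (-(y/4))^2))]
  have hqR : 0 < x^2/8 + (x/2) * ((1 - x/8)^2 + (-(y/4))^2)^2 := by
    nlinarith [mul_nonneg hx.le (sq_nonneg ((1 - x/8)^2 + (-(y/4))^2)), sq_nonneg x]
  -- re/im decomposition of NUM
  have hNUV : NUM = (((1 - x/4 + x^2/32 - y^2/8)^2 - (x*y/8 - y/2)^2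
        + (x^2/8 - (x/2)*((1-x/8)^4 - 6*(1-x/8)^2*(-(y/4))^2 + (-(y/4))^4) : ℝ) : ℝ) : ℂ)
      + (((2*(1 - x/4 + x^2/32 - y^2/8)*(x*y/8 - y/2)
        - (x/2)*(4*(1-x/8)^3*(-(y/4)) - 4*(1-x/8)*(-(y/4))^3) : ℝ)) : ℂ) * Complex.I := by
    rw [hNUM]
    simp only [Complex.ext_iff, Complex.sub_re, Complex.sub_im, Complex.add_re, Complex.add_im,
      Complex.mul_re, Complex.mul_im, Complex.ofReal_re, Complex.ofReal_im, Complex.I_re,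
      Complex.I_im, pow_succ, pow_zero, one_mul]
    constructor <;> ring
  have hNS : Complex.normSq NUM = ((1 - x/4 + x^2/32 - y^2/8)^2 - (x*y/8 - y/2)^2
        + (x^2/8 - (x/2)*((1-x/8)^4 - 6*(1-x/8)^2*(-(y/4))^2 + (-(y/4))^4)))^2
      + (2*(1 - x/4 + x^2/32 - y^2/8)*(x*y/8 - y/2)
        - (x/2)*(4*(1-x/8)^3*(-(y/4)) - 4*(1-x/8)*(-(y/4))^3))^2 := by
    rw [hNUV, Complex.normSq_add_mul_I]
  refine ⟨hCR0, ?_, ?_⟩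
  · intro hb1 hb2 hb3
    have habs : Complex.normSq NUM < CR^2 := by
      by_cases hB : (1-x/8)^2 = (-(y/4))^2
      · -- aligned case: need Q ≠ 0
        have hQ : x*y/8 - y/2 ≠ 0 := by
          intro h0
          have hy0 : y * (x - 4) = 0 := by linear_combination 8 * h0
          rcases mul_eq_zero.mp hy0 with hy | hx4
          · have : (1 - x/8)^2 = 0 := by rw [hB, hy]; norm_num
            have : 1 - x/8 = 0 := by
              exact pow_eq_zero_iff (by norm_num) |>.mp this
            exact hb3 ⟨by linarith, hy⟩
          · have hx4 : x = 4 := by linarith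
            have : (y - 2) * (y + 2) = 0 := by
              rw [hx4] at hB; linear_combination (-16 : ℝ) * hB
            rcases mul_eq_zero.mp this with h | h
            · exact hb1 ⟨hx4, by linarith⟩
            · exact hb2 ⟨hx4, by linarith⟩
        have key : CR^2 - Complex.normSq NUM
            = 4*(x*y/8 - y/2)^2*(x^2/8 + (x/2)*((1-x/8)^2+(-(y/4))^2)^2) := by
          rw [hNS, hCR]
          linear_combination (x^3/4*((1-x/8)^2-(-(y/4))^2)
            + 2*x*(((1 - x/4 + x^2/32 - y^2/8)^2-(x*y/8 - y/2)^2)*((1-x/8)^2-(-(y/4))^2)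
              + 4*(1 - x/4 + x^2/32 - y^2/8)*(x*y/8 - y/2)*(1-x/8)*(-(y/4)))) * hB
        nlinarith [key, mul_pos (mul_pos (by norm_num : (0:ℝ) < 4)
          (lt_of_le_of_ne (sq_nonneg (x*y/8 - y/2)) (Ne.symm (pow_ne_zero 2 hQ)))) hqR]
      · -- non-aligned case: strict triangle inequality
        have hd : (1-x/8)^2 - (-(y/4))^2 ≠ 0 := sub_ne_zero.mpr hB
        have hW : (((x^2/8 : ℝ) : ℂ) - ((x/2 : ℝ) : ℂ)
              * (((1 - x/8 : ℝ) : ℂ) + ((-(y/4) : ℝ) : ℂ) * Complex.I)^4)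
            = (((x^2/8 - (x/2)*((1-x/8)^4 - 6*(1-x/8)^2*(-(y/4))^2 + (-(y/4))^4) : ℝ)) : ℂ)
              + (((-(x/2))*(4*(1-x/8)^3*(-(y/4)) - 4*(1-x/8)*(-(y/4))^3) : ℝ) : ℂ) * Complex.I := by
          simp only [Complex.ext_iff, Complex.sub_re, Complex.sub_im, Complex.add_re,
            Complex.add_im, Complex.mul_re, Complex.mul_im, Complex.ofReal_re, Complex.ofReal_im,
            Complex.I_re, Complex.I_im, pow_succ, pow_zero, one_mul]
          constructor <;> ring
        have hWS : Complex.normSq (((x^2/8 : ℝ) : ℂ) - ((x/2 : ℝ) : ℂ)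
              * (((1 - x/8 : ℝ) : ℂ) + ((-(y/4) : ℝ) : ℂ) * Complex.I)^4)
            = (x^2/8 - (x/2)*((1-x/8)^4 - 6*(1-x/8)^2*(-(y/4))^2 + (-(y/4))^4))^2
              + ((-(x/2))*(4*(1-x/8)^3*(-(y/4)) - 4*(1-x/8)*(-(y/4))^3))^2 := by
          rw [hW, Complex.normSq_add_mul_I]
        have hWlt : Complex.normSq (((x^2/8 : ℝ) : ℂ) - ((x/2 : ℝ) : ℂ)
              * (((1 - x/8 : ℝ) : ℂ) + ((-(y/4) : ℝ) : ℂ) * Complex.I)^4)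
            < (x^2/8 + (x/2)*((1-x/8)^2+(-(y/4))^2)^2)^2 := by
          rw [hWS]
          have h1 : 0 < x^3/4 * ((1-x/8)^2 - (-(y/4))^2)^2 :=
            mul_pos (by positivity) (lt_of_le_of_ne (sq_nonneg _) (Ne.symm (pow_ne_zero 2 hd)))
          nlinarith [h1]
        have habsW : ‖(((x^2/8 : ℝ) : ℂ) - ((x/2 : ℝ) : ℂ)
              * (((1 - x/8 : ℝ) : ℂ) + ((-(y/4) : ℝ) : ℂ) * Complex.I)^4)‖
            < x^2/8 + (x/2)*((1-x/8)^2+(-(y/4))^2)^2 := by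
          rw [Complex.norm_def]
          calc Real.sqrt (Complex.normSq _) < Real.sqrt ((x^2/8 + (x/2)*((1-x/8)^2+(-(y/4))^2)^2)^2) :=
                Real.sqrt_lt_sqrt (Complex.normSq_nonneg _) hWlt
            _ = _ := Real.sqrt_sq hqR.le
        have hsplit : NUM = ((((1 - x/4 + x^2/32 - y^2/8 : ℝ)) : ℂ)
              + ((x*y/8 - y/2 : ℝ) : ℂ) * Complex.I)^2
            + (((x^2/8 : ℝ) : ℂ) - ((x/2 : ℝ) : ℂ)
              * (((1 - x/8 : ℝ) : ℂ) + ((-(y/4) : ℝ) : ℂ) * Complex.I)^4) := by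
          rw [hNUM]; ring
        have h2 : ‖NUM‖ ≤ ‖(((((1 - x/4 + x^2/32 - y^2/8 : ℝ)) : ℂ)
              + ((x*y/8 - y/2 : ℝ) : ℂ) * Complex.I)^2)‖
            + ‖((((x^2/8 : ℝ) : ℂ) - ((x/2 : ℝ) : ℂ)
              * (((1 - x/8 : ℝ) : ℂ) + ((-(y/4) : ℝ) : ℂ) * Complex.I)^4))‖ := by
          rw [hsplit]; exact norm_add_le _ _
        have h3 : ‖(((((1 - x/4 + x^2/32 - y^2/8 : ℝ)) : ℂ)
              + ((x*y/8 - y/2 : ℝ) : ℂ) * Complex.I)^2)‖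
            = (1 - x/4 + x^2/32 - y^2/8)^2 + (x*y/8 - y/2)^2 := by
          rw [norm_pow, Complex.sq_norm, Complex.normSq_add_mul_I]
        have habs' : ‖NUM‖ < CR := by rw [hCR]; linarith
        have : ‖NUM‖ ^ 2 < CR ^ 2 := by
          have h0 : 0 ≤ ‖NUM‖ := norm_nonneg _
          nlinarith [habs']
        rwa [Complex.sq_norm] at this
      -- conclude abs < CR from normSq < CR^2
    rw [Complex.norm_def]
    calc Real.sqrt (Complex.normSq NUM) < Real.sqrt (CR^2) :=
          Real.sqrt_lt_sqrt (Complex.normSq_nonneg _) habs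
      _ = CR := Real.sqrt_sq hCR0.le
  · rintro (⟨rfl, rfl⟩ | ⟨rfl, rfl⟩ | ⟨rfl, rfl⟩) <;>
      rw [hNUM, hCR] <;>
      norm_num [Complex.ext_iff, pow_succ, Complex.mul_re, Complex.mul_im]

/-- Absolute stability of the normalized midpoint second-order structure-preserving
scheme (Theorem 9 of the paper): decay holds for every density matrix iff
`z ∉ {4 + 2i, 4 - 2i, 8}`. -/
theorem abs_stability_SP2_MP
    (a b Δt : ℝ) (ha : 0 < a) (hΔt : 0 < Δt) (z : ℂ)
    (hz : z = ((a : ℂ) + (b : ℂ) * Complex.I) * (Δt : ℂ))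
    (σX σY σZ H L : Matrix (Fin 2) (Fin 2) ℂ)
    (hσX : σX = !![0, 1; 1, 0])
    (hσY : σY = !![0, -Complex.I; Complex.I, 0])
    (hσZ : σZ = !![1, 0; 0, -1])
    (hH : H = ((b / 2 : ℝ) : ℂ) • σZ)
    (hL : L = (Real.sqrt (a / 2) : ℂ) • σZ)
    (𝓛 : Matrix (Fin 2) (Fin 2) ℂ → Matrix (Fin 2) (Fin 2) ℂ)
    (h𝓛 : 𝓛 = fun ρ => -Complex.I • (H * ρ - ρ * H) + L * ρ * Lᴴ
        - (1 / 2 : ℂ) • (Lᴴ * L * ρ + ρ * (Lᴴ * L)))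
    (Heff J : Matrix (Fin 2) (Fin 2) ℂ)
    (hHeff : Heff = H - (Complex.I / 2) • (Lᴴ * L))
    (hJ : J = -(Complex.I • Heff))
    (𝓐un 𝓐 : Matrix (Fin 2) (Fin 2) ℂ → Matrix (Fin 2) (Fin 2) ℂ)
    (h𝓐un : 𝓐un = fun ρ =>
      (1 + Δt • J + (Δt ^ 2 / 2) • J ^ 2) * ρ * (1 + Δt • J + (Δt ^ 2 / 2) • J ^ 2)ᴴ
        + Δt • ((1 + (Δt / 2) • J) * L
            * ((1 + (Δt / 2) • J) * ρ * (1 + (Δt / 2) • J)ᴴ)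
            * Lᴴ * (1 + (Δt / 2) • J)ᴴ)
        + (Δt ^ 2 / 2) • (L * (L * ρ * Lᴴ) * Lᴴ))
    (h𝓐 : 𝓐 = fun ρ => ((𝓐un ρ).trace)⁻¹ • 𝓐un ρ) :
    (∀ ρ0 : Matrix (Fin 2) (Fin 2) ℂ, ρ0.PosSemidef → ρ0.trace = 1 →
        Tendsto (fun k => (σX * 𝓐^[k] ρ0).trace) atTop (nhds 0) ∧
        Tendsto (fun k => (σY * 𝓐^[k] ρ0).trace) atTop (nhds 0))
      ↔ (z ≠ 4 + 2 * Complex.I ∧ z ≠ 4 - 2 * Complex.I ∧ z ≠ 8) := by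
  
  -- replace a by 2*s^2 where s = sqrt(a/2) > 0
  obtain ⟨s, hs_pos, hsq, hs_def⟩ : ∃ s : ℝ, 0 < s ∧ s^2 = a/2 ∧ Real.sqrt (a/2) = s :=
    ⟨Real.sqrt (a/2), Real.sqrt_pos.mpr (by linarith), Real.sq_sqrt (by linarith), rfl⟩
  rw [hs_def] at hL
  have hA : a = 2*s^2 := by rw [hsq]; ring
  subst hA
  subst hz
  -- abbreviations
  obtain ⟨x, hxd⟩ : ∃ x : ℝ, x = 2*s^2*Δt := ⟨_, rfl⟩
  obtain ⟨y, hyd⟩ : ∃ y : ℝ, y = b*Δt := ⟨_, rfl⟩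
  have hxpos : 0 < x := by rw [hxd]; positivity
  obtain ⟨g, hgd⟩ : ∃ g : ℂ, g = ((-(s^2/2) : ℝ) : ℂ) + ((-(b/2) : ℝ) : ℂ) * Complex.I := ⟨_, rfl⟩
  obtain ⟨NUM, hNUMd⟩ : ∃ N : ℂ,
      N = (((1 - x/4 + x^2/32 - y^2/8 : ℝ) : ℂ) + ((x*y/8 - y/2 : ℝ) : ℂ) * Complex.I)^2
        - ((x/2 : ℝ) : ℂ) * (((1 - x/8 : ℝ) : ℂ) + ((-(y/4) : ℝ) : ℂ) * Complex.I)^4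
        + ((x^2/8 : ℝ) : ℂ) := ⟨_, rfl⟩
  obtain ⟨CR, hCRd⟩ : ∃ C : ℝ,
      C = ((1 - x/4 + x^2/32 - y^2/8)^2 + (x*y/8 - y/2)^2)
        + (x/2) * ((1 - x/8)^2 + (-(y/4))^2)^2 + x^2/8 := ⟨_, rfl⟩
  obtain ⟨hCRpos, himpA, himpB⟩ := SP2_scalar x y hxpos NUM CR hNUMd hCRd
  have hCRne : ((CR : ℝ) : ℂ) ≠ 0 := Complex.ofReal_ne_zero.mpr hCRpos.ne'
  obtain ⟨ν, hνd⟩ : ∃ v : ℂ, v = NUM / ((CR : ℝ) : ℂ) := ⟨_, rfl⟩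
  -- matrix forms of J and L
  have hJ2 : J = !![g, 0; 0, conj g] := by
    rw [hJ, hHeff, hH, hL, hσZ, hgd]
    ext i j
    fin_cases i <;> fin_cases j <;>
      simp [Matrix.mul_apply, Fin.sum_univ_two, Matrix.conjTranspose_apply, map_ofNat,
        _root_.map_mul, map_inv₀, Complex.inv_re, Complex.inv_im, Complex.normSq,
        ← Complex.ofReal_pow, Complex.ext_iff] <;> push_cast <;> ring_nf <;> norm_num
  have hL2 : L = !![(s:ℂ), 0; 0, -(s:ℂ)] := by
    rw [hL, hσZ]
    ext i j
    fin_cases i <;> fin_cases j <;> simp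
  -- the master formula for one step
  have hmaster : ∀ ρ : Matrix (Fin 2) (Fin 2) ℂ,
      𝓐un ρ = !![((CR:ℝ):ℂ) * ρ 0 0, NUM * ρ 0 1;
                  conj NUM * ρ 1 0, ((CR:ℝ):ℂ) * ρ 1 1] := by
    intro ρ
    rw [h𝓐un]
    dsimp only
    rw [hJ2, hL2]
    refine SP2_aux g s Δt _ _ ?_ ?_ ρ _ _ rfl rfl
    · rw [hCRd, hgd, hxd, hyd]
      simp only [map_add, _root_.map_mul, map_pow, map_one, map_div₀, map_ofNat,
        Complex.conj_ofReal, Complex.conj_I]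
      simp only [Complex.ext_iff, Complex.add_re, Complex.add_im, Complex.sub_re, Complex.sub_im,
        Complex.mul_re, Complex.mul_im, Complex.ofReal_re, Complex.ofReal_im, Complex.I_re,
        Complex.I_im, Complex.one_re, Complex.one_im, Complex.neg_re, Complex.neg_im,
        pow_succ, pow_zero, one_mul, Complex.div_re, Complex.div_im, Complex.re_ofNat,
        Complex.im_ofNat, Complex.normSq_ofNat]
      norm_num
      constructor <;> ring
    · rw [hNUMd, hgd, hxd, hyd]
      simp only [Complex.ext_iff, Complex.add_re, Complex.add_im, Complex.sub_re, Complex.sub_im,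
        Complex.mul_re, Complex.mul_im, Complex.ofReal_re, Complex.ofReal_im, Complex.I_re,
        Complex.I_im, Complex.one_re, Complex.one_im, Complex.neg_re, Complex.neg_im,
        pow_succ, pow_zero, one_mul, Complex.div_re, Complex.div_im, Complex.re_ofNat,
        Complex.im_ofNat, Complex.normSq_ofNat]
      norm_num
      constructor <;> ring
  have htrace : ∀ ρ : Matrix (Fin 2) (Fin 2) ℂ, (𝓐un ρ).trace = ((CR:ℝ):ℂ) * ρ.trace := by
    intro ρ
    rw [hmaster ρ, Matrix.trace_fin_two, Matrix.trace_fin_two]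
    simp
    ring
  have hconjν : conj ν = conj NUM / ((CR:ℝ):ℂ) := by
    rw [hνd, map_div₀, Complex.conj_ofReal]
  have hstep : ∀ ρ : Matrix (Fin 2) (Fin 2) ℂ, ρ.trace = 1 →
      (𝓐 ρ).trace = 1 ∧ (𝓐 ρ) 0 1 = ν * ρ 0 1 ∧ (𝓐 ρ) 1 0 = conj ν * ρ 1 0 := by
    intro ρ h1
    rw [h𝓐]
    dsimp only
    have ht : (𝓐un ρ).trace = ((CR:ℝ):ℂ) := by rw [htrace, h1, mul_one]
    rw [ht]
    refine ⟨?_, ?_, ?_⟩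
    · rw [Matrix.trace_smul, ht, smul_eq_mul]
      field_simp
    · rw [Matrix.smul_apply, hmaster ρ]
      simp [hνd]
      field_simp
    · rw [Matrix.smul_apply, hmaster ρ]
      simp [hconjν]
      field_simp
  have hiter : ∀ ρ0 : Matrix (Fin 2) (Fin 2) ℂ, ρ0.trace = 1 → ∀ k : ℕ,
      (𝓐^[k] ρ0).trace = 1 ∧ (𝓐^[k] ρ0) 0 1 = ν^k * ρ0 0 1 ∧
      (𝓐^[k] ρ0) 1 0 = (conj ν)^k * ρ0 1 0 := by
    intro ρ0 h1 k
    induction k with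
    | zero => refine ⟨h1, by simp, by simp⟩
    | succ k ih =>
      obtain ⟨iht, ih01, ih10⟩ := ih
      rw [Function.iterate_succ_apply']
      obtain ⟨st, s01, s10⟩ := hstep _ iht
      refine ⟨st, ?_, ?_⟩
      · rw [s01, ih01, pow_succ]; ring
      · rw [s10, ih10, pow_succ]; ring
  have htrX : ∀ ρ : Matrix (Fin 2) (Fin 2) ℂ, (σX * ρ).trace = ρ 0 1 + ρ 1 0 := by
    intro ρ
    rw [hσX, Matrix.trace_fin_two]
    simp [Matrix.mul_apply, Fin.sum_univ_two]
    ring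
  have htrY : ∀ ρ : Matrix (Fin 2) (Fin 2) ℂ,
      (σY * ρ).trace = Complex.I * ρ 0 1 - Complex.I * ρ 1 0 := by
    intro ρ
    rw [hσY, Matrix.trace_fin_two]
    simp [Matrix.mul_apply, Fin.sum_univ_two]
    ring
  -- translation of the bad points
  have hziff1 : ((((2*s^2 : ℝ)) : ℂ) + (b:ℂ) * Complex.I) * (Δt:ℂ) = 4 + 2*Complex.I
      ↔ (x = 4 ∧ y = 2) := by
    have he : ((((2*s^2 : ℝ)) : ℂ) + (b:ℂ) * Complex.I) * (Δt:ℂ)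
        = ((x : ℝ) : ℂ) + ((y : ℝ) : ℂ) * Complex.I := by
      rw [hxd, hyd]; push_cast; ring
    rw [he]
    simp [Complex.ext_iff]
  have hziff2 : ((((2*s^2 : ℝ)) : ℂ) + (b:ℂ) * Complex.I) * (Δt:ℂ) = 4 - 2*Complex.I
      ↔ (x = 4 ∧ y = -2) := by
    have he : ((((2*s^2 : ℝ)) : ℂ) + (b:ℂ) * Complex.I) * (Δt:ℂ)
        = ((x : ℝ) : ℂ) + ((y : ℝ) : ℂ) * Complex.I := by
      rw [hxd, hyd]; push_cast; ring
    rw [he]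
    simp [Complex.ext_iff]
  have hziff3 : ((((2*s^2 : ℝ)) : ℂ) + (b:ℂ) * Complex.I) * (Δt:ℂ) = 8
      ↔ (x = 8 ∧ y = 0) := by
    have he : ((((2*s^2 : ℝ)) : ℂ) + (b:ℂ) * Complex.I) * (Δt:ℂ)
        = ((x : ℝ) : ℂ) + ((y : ℝ) : ℂ) * Complex.I := by
      rw [hxd, hyd]; push_cast; ring
    rw [he]
    simp [Complex.ext_iff]
  -- the special density matrix (I + σX)/2
  have hPSD : (!![1/2, 1/2; 1/2, 1/2] : Matrix (Fin 2) (Fin 2) ℂ).PosSemidef := by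
    rw [Matrix.posSemidef_iff_dotProduct_mulVec]
    constructor
    · ext i j
      fin_cases i <;> fin_cases j <;>
        simp [Matrix.conjTranspose_apply, Matrix.IsHermitian]
    · intro v
      have hv : (star v) ⬝ᵥ ((!![1/2, 1/2; 1/2, 1/2] : Matrix (Fin 2) (Fin 2) ℂ).mulVec v)
          = ((Complex.normSq (v 0 + v 1) / 2 : ℝ) : ℂ) := by
        simp [dotProduct, Matrix.mulVec, Fin.sum_univ_two, Complex.normSq_apply,
          Complex.ext_iff, Complex.mul_re, Complex.mul_im, Complex.add_re, Complex.add_im]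
        constructor <;> ring
      rw [hv]
      rw [Complex.zero_le_real]
      exact div_nonneg (Complex.normSq_nonneg _) (by norm_num)
  have htrhalf : (!![1/2, 1/2; 1/2, 1/2] : Matrix (Fin 2) (Fin 2) ℂ).trace = 1 := by
    rw [Matrix.trace_fin_two]
    norm_num
  constructor
  · -- decay implies z avoids the bad points
    intro hdecay
    have hcontra : ¬ (ν = 1) := by
      intro hν1
      obtain ⟨hX, _⟩ := hdecay !![1/2, 1/2; 1/2, 1/2] hPSD htrhalf
      have hconst : ∀ k : ℕ, ((σX * 𝓐^[k] !![1/2, 1/2; 1/2, 1/2]).trace) = 1 := by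
        intro k
        obtain ⟨_, h01, h10⟩ := hiter _ htrhalf k
        rw [htrX, h01, h10, hν1]
        simp
        norm_num
      have h1 : Tendsto (fun _ : ℕ => (1:ℂ)) atTop (nhds 0) := by
        refine Tendsto.congr (fun k => (hconst k)) hX
      have := tendsto_nhds_unique h1 tendsto_const_nhds
      simp at this
    refine ⟨?_, ?_, ?_⟩
    · intro hzeq
      exact hcontra (by rw [hνd, himpB (Or.inl (hziff1.mp hzeq))]; field_simp)
    · intro hzeq
      exact hcontra (by rw [hνd, himpB (Or.inr (Or.inl (hziff2.mp hzeq)))]; field_simp)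
    · intro hzeq
      exact hcontra (by rw [hνd, himpB (Or.inr (Or.inr (hziff3.mp hzeq)))]; field_simp)
  · -- z avoids bad points implies decay
    rintro ⟨hz1, hz2, hz3⟩ ρ0 _ htr1
    have habs : ‖NUM‖ < CR :=
      himpA (fun h => hz1 (hziff1.mpr h)) (fun h => hz2 (hziff2.mpr h))
        (fun h => hz3 (hziff3.mpr h))
    have hν : ‖ν‖ < 1 := by
      rw [hνd, norm_div, Complex.norm_real, Real.norm_eq_abs,
        abs_of_pos hCRpos]
      rw [div_lt_one hCRpos]
      exact habs
    have hνc : ‖conj ν‖ < 1 := by rwa [RCLike.norm_conj]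
    have hpow : Tendsto (fun k : ℕ => ν^k) atTop (nhds 0) :=
      tendsto_pow_atTop_nhds_zero_of_norm_lt_one hν
    have hpowc : Tendsto (fun k : ℕ => (conj ν)^k) atTop (nhds 0) :=
      tendsto_pow_atTop_nhds_zero_of_norm_lt_one hνc
    constructor
    · have hlim : Tendsto (fun k : ℕ => ν^k * ρ0 0 1 + (conj ν)^k * ρ0 1 0) atTop (nhds 0) := by
        have := (hpow.mul_const (ρ0 0 1)).add (hpowc.mul_const (ρ0 1 0))
        simpa using this
      refine Tendsto.congr (fun k => ?_) hlim
      obtain ⟨_, h01, h10⟩ := hiter ρ0 htr1 k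
      rw [htrX, h01, h10]
    · have hlim : Tendsto (fun k : ℕ =>
          Complex.I * (ν^k * ρ0 0 1) - Complex.I * ((conj ν)^k * ρ0 1 0)) atTop (nhds 0) := by
        have := ((hpow.mul_const (ρ0 0 1)).const_mul Complex.I).sub
          ((hpowc.mul_const (ρ0 1 0)).const_mul Complex.I)
        simpa using this
      refine Tendsto.congr (fun k => ?_) hlim
      obtain ⟨_, h01, h10⟩ := hiter ρ0 htr1 k
      rw [htrY, h01, h10]
end

section
/- Let Φ be the linear endomorphism of the space of 2×2 complex matrices given by Φ(ρ) := σ_X ρ σ_X. Then for every real t < 0 there exists a 2×2 positive semidefinite complex matrix ρ with trace 1 such that exp(t·Φ)(ρ) is not positive semidefinite; that is, exp(t·Φ) is not positivity-preserving for any t < 0. -/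
open scoped Matrix ComplexOrder

attribute [local instance] Matrix.normedAddCommGroup Matrix.normedSpace

lemma exp_apply_of_eigen {E : Type*} [NormedAddCommGroup E] [NormedSpace ℂ E]
    [CompleteSpace E] (A : E →L[ℂ] E) (c : ℂ) (x : E) (h : A x = c • x) :
    NormedSpace.exp A x = Complex.exp c • x := by
  have hpow : ∀ n : ℕ, (A ^ n) x = c ^ n • x := by
    intro n
    induction n with
    | zero => simp
    | succ n ih =>
        rw [pow_succ, pow_succ, ContinuousLinearMap.mul_apply, h, map_smul, ih,
          smul_smul]
        rw [mul_comm]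
  have hsum : Summable fun n : ℕ => ((n.factorial : ℂ)⁻¹ • A ^ n) :=
    NormedSpace.expSeries_summable' A
  have hsumc : Summable fun n : ℕ => ((n.factorial : ℂ)⁻¹ * c ^ n) := by
    simpa [smul_eq_mul] using NormedSpace.expSeries_summable' (𝕂 := ℂ) c
  calc NormedSpace.exp A x
      = (ContinuousLinearMap.apply ℂ E x) (∑' n : ℕ, (n.factorial : ℂ)⁻¹ • A ^ n) := by
        rw [NormedSpace.exp_eq_tsum (𝕂 := ℂ)]; rfl
    _ = ∑' n : ℕ, (ContinuousLinearMap.apply ℂ E x) ((n.factorial : ℂ)⁻¹ • A ^ n) :=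
        (ContinuousLinearMap.apply ℂ E x).map_tsum hsum
    _ = ∑' n : ℕ, ((n.factorial : ℂ)⁻¹ * c ^ n) • x := by
        refine tsum_congr fun n => ?_
        simp [ContinuousLinearMap.apply_apply, hpow n, smul_smul]
    _ = (∑' n : ℕ, ((n.factorial : ℂ)⁻¹ * c ^ n)) • x := hsumc.tsum_smul_const x
    _ = Complex.exp c • x := by
        rw [Complex.exp_eq_exp_ℂ, NormedSpace.exp_eq_tsum (𝕂 := ℂ)]
        simp [smul_eq_mul]

instance matrixFin2CLMIsTopologicalRing :
    IsTopologicalRing (Matrix (Fin 2) (Fin 2) ℂ →L[ℂ] Matrix (Fin 2) (Fin 2) ℂ) :=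
  letI : NormedRing (Matrix (Fin 2) (Fin 2) ℂ →L[ℂ] Matrix (Fin 2) (Fin 2) ℂ) :=
    @ContinuousLinearMap.toNormedRing ℂ (Matrix (Fin 2) (Fin 2) ℂ) _ _ _
  @NonUnitalSeminormedRing.toIsTopologicalRing _ inferInstance

/-- `exp(t Φ)` with `Φ(ρ) = σ_X ρ σ_X` is not positivity-preserving for any `t < 0`:
for every `t < 0` there is a density matrix `ρ` such that `exp(t Φ)(ρ)` is not
positive semidefinite. -/
theorem exp_sigmaX_sandwich_not_posPreserving
    (Φ : Matrix (Fin 2) (Fin 2) ℂ →L[ℂ] Matrix (Fin 2) (Fin 2) ℂ)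
    (hΦ : ∀ ρ : Matrix (Fin 2) (Fin 2) ℂ, Φ ρ = !![0, 1; 1, 0] * ρ * !![0, 1; 1, 0]) :
    ∀ t : ℝ, t < 0 →
      ∃ ρ : Matrix (Fin 2) (Fin 2) ℂ, ρ.PosSemidef ∧ ρ.trace = 1 ∧
        ¬ ((NormedSpace.exp ((t : ℂ) • Φ)) ρ).PosSemidef := by
  intro t ht
  refine ⟨!![1, 0; 0, 0], ?_, ?_, ?_⟩
  · rw [Matrix.posSemidef_iff_dotProduct_mulVec]
    constructor
    · ext i j
      fin_cases i <;> fin_cases j <;>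
        simp [Matrix.conjTranspose_apply]
    · intro x
      have : (star x) ⬝ᵥ (!![(1:ℂ), 0; 0, 0]).mulVec x = star (x 0) * x 0 := by
        simp [Matrix.mulVec, dotProduct, Fin.sum_univ_two]
      rw [this]
      exact star_mul_self_nonneg (x 0)
  · simp [Matrix.trace, Fin.sum_univ_two]
  · -- eigen decomposition
    set vp : Matrix (Fin 2) (Fin 2) ℂ := !![1, 0; 0, 1] with hvp
    set vm : Matrix (Fin 2) (Fin 2) ℂ := !![1, 0; 0, -1] with hvm
    have hΦp : ((t : ℂ) • Φ) vp = (t : ℂ) • vp := by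
      simp only [ContinuousLinearMap.smul_apply, hΦ, hvp, Matrix.mul_fin_two]
      norm_num
    have hΦm : ((t : ℂ) • Φ) vm = (-(t : ℂ)) • vm := by
      simp only [ContinuousLinearMap.smul_apply, hΦ, hvm, Matrix.mul_fin_two]
      ext i j
      fin_cases i <;> fin_cases j <;> simp
    have hep := exp_apply_of_eigen ((t : ℂ) • Φ) (t : ℂ) vp hΦp
    have hem := exp_apply_of_eigen ((t : ℂ) • Φ) (-(t : ℂ)) vm hΦm
    have hρ : (!![1, 0; 0, 0] : Matrix (Fin 2) (Fin 2) ℂ) = (2⁻¹ : ℂ) • (vp + vm) := by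
      ext i j
      fin_cases i <;> fin_cases j <;> simp [hvp, hvm] <;> norm_num
    have hval : (NormedSpace.exp ((t : ℂ) • Φ)) !![1, 0; 0, 0]
        = (2⁻¹ : ℂ) • (Complex.exp t • vp + Complex.exp (-(t : ℂ)) • vm) := by
      rw [hρ, map_smul, map_add]; exact congrArg _ (congrArg₂ (· + ·) hep hem)
    intro hpsd
    have hentry := hpsd.dotProduct_mulVec_nonneg (Pi.single 1 1)
    rw [hval] at hentry
    have h11 : (star (Pi.single 1 1 : Fin 2 → ℂ)) ⬝ᵥ
        ((2⁻¹ : ℂ) • (Complex.exp t • vp + Complex.exp (-(t : ℂ)) • vm)).mulVec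
          (Pi.single 1 1)
        = (2⁻¹ : ℂ) * (Complex.exp t - Complex.exp (-(t : ℂ))) := by
      simp [Matrix.mulVec, dotProduct, Fin.sum_univ_two, hvp, hvm,
        Pi.single_apply, Matrix.smul_apply, Matrix.add_apply]
      ring
    rw [h11] at hentry
    have hre : (2⁻¹ : ℂ) * (Complex.exp t - Complex.exp (-(t : ℂ)))
        = (((Real.exp t - Real.exp (-t)) / 2 : ℝ) : ℂ) := by
      rw [← Complex.ofReal_neg, ← Complex.ofReal_exp, ← Complex.ofReal_exp]
      push_cast
      ring
    rw [hre, Complex.zero_le_real] at hentry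
    have : Real.exp t < Real.exp (-t) := Real.exp_lt_exp.2 (by linarith)
    linarith
end
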